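/- arXiv:2302.14162 — 11 statements merged into one kernel-verified Lean document; each statement's English description precedes it below -/
import Mathlib

section
/- Let $t_0 \in \mathbb{R}$ and let $V : \mathbb{R} \to \mathbb{R}$ be differentiable with $V(t) \ge 0$ for all $t \ge t_0$. Suppose there are constants $\chi_1 > 0$, $\chi_2 > 0$, $\varrho > 1$ and $0 < \varsigma < 1$ such that $V'(t) \le -\chi_1 V(t)^{\varrho} - \chi_2 V(t)^{\varsigma}$ for all $t \ge t_0$. Then $V(t) = 0$ for every $t \ge t_0 + \frac{1}{\chi_1(\varrho-1)} + \frac{1}{\chi_2(1-\varsigma)}$. -/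
/-- Fixed-time stability (Lemma 1): a nonnegative differentiable scalar Lyapunov
function satisfying the two-term power differential inequality vanishes after a
settling time independent of its initial value. Powers are real powers (`rpow`). -/
theorem fixed_time_stability
    (t0 : ℝ) (V : ℝ → ℝ) (hV : Differentiable ℝ V)
    (hVnonneg : ∀ t, t0 ≤ t → 0 ≤ V t)
    (χ1 χ2 ϱ ς : ℝ)
    (hχ1 : 0 < χ1) (hχ2 : 0 < χ2) (hϱ : 1 < ϱ) (hς0 : 0 < ς) (hς1 : ς < 1)
    (hineq : ∀ t, t0 ≤ t → deriv V t ≤ -χ1 * (V t) ^ ϱ - χ2 * (V t) ^ ς) :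
    ∀ t, t0 + 1 / (χ1 * (ϱ - 1)) + 1 / (χ2 * (1 - ς)) ≤ t → V t = 0 := by
  have hϱ1 : 0 < χ1 * (ϱ - 1) := mul_pos hχ1 (by linarith)
  have hς2 : 0 < χ2 * (1 - ς) := mul_pos hχ2 (by linarith)
  set t1 : ℝ := t0 + 1 / (χ1 * (ϱ - 1)) with ht1
  set T : ℝ := t1 + 1 / (χ2 * (1 - ς)) with hT
  have ht01 : t0 ≤ t1 := le_add_of_nonneg_right (by positivity)
  have ht1T : t1 ≤ T := le_add_of_nonneg_right (by positivity)
  -- V is antitone on Ici t0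
  have hanti : AntitoneOn V (Set.Ici t0) := by
    apply antitoneOn_of_deriv_nonpos (convex_Ici t0) hV.continuous.continuousOn
      (hV.differentiableOn)
    intro x hx
    rw [interior_Ici] at hx
    have hx' : t0 ≤ x := le_of_lt hx
    have h1 : 0 ≤ V x := hVnonneg x hx'
    have h2 : 0 ≤ (V x) ^ ϱ := Real.rpow_nonneg h1 _
    have h3 : 0 ≤ (V x) ^ ς := Real.rpow_nonneg h1 _
    have := hineq x hx'
    nlinarith
  -- Phase 1: V t1 ≤ 1
  have hphase1 : V t1 ≤ 1 := by
    by_contra hVc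
    push_neg at hVc
    have hVpos : ∀ x ∈ Set.Icc t0 t1, 1 < V x := by
      intro x hx
      exact lt_of_lt_of_le hVc (hanti (Set.mem_Ici.2 hx.1) (Set.mem_Ici.2 ht01) hx.2)
    set g : ℝ → ℝ := fun t => (V t) ^ (1 - ϱ) with hg
    have hgc : ContinuousOn g (Set.Icc t0 t1) := by
      intro x hx
      have hVx : V x ≠ 0 := by have := hVpos x hx; linarith
      exact ((Real.continuousAt_rpow_const (V x) (1 - ϱ) (Or.inl hVx)).comp
        (hV.continuous.continuousAt)).continuousWithinAt
    have hderiv : ∀ x ∈ Set.Ioo t0 t1, HasDerivAt g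
        ((1 - ϱ) * (V x) ^ (1 - ϱ - 1) * deriv V x) x := by
      intro x hx
      have hVx : V x ≠ 0 := by have := hVpos x (Set.mem_Icc_of_Ioo hx); linarith
      exact (Real.hasDerivAt_rpow_const (Or.inl hVx)).comp x (hV x).hasDerivAt
    have hbound : ∀ x ∈ interior (Set.Icc t0 t1), χ1 * (ϱ - 1) ≤ deriv g x := by
      rw [interior_Icc]
      intro x hx
      rw [(hderiv x hx).deriv]
      have hVx : 1 < V x := hVpos x (Set.mem_Icc_of_Ioo hx)
      have hVx0 : 0 < V x := by linarith
      have hd := hineq x (le_of_lt hx.1)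
      have h3 : 0 ≤ (V x) ^ ς := Real.rpow_nonneg (le_of_lt hVx0) _
      have hd2 : deriv V x ≤ -χ1 * (V x) ^ ϱ := by nlinarith
      have hp : 0 < (V x) ^ (1 - ϱ - 1) := Real.rpow_pos_of_pos hVx0 _
      have key : (1 - ϱ) * (V x) ^ (1 - ϱ - 1) * deriv V x ≥
          (1 - ϱ) * (V x) ^ (1 - ϱ - 1) * (-χ1 * (V x) ^ ϱ) := by
        have hneg : (1 - ϱ) * (V x) ^ (1 - ϱ - 1) ≤ 0 := by nlinarith
        exact mul_le_mul_of_nonpos_left hd2 hneg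
      have heq : (1 - ϱ) * (V x) ^ (1 - ϱ - 1) * (-χ1 * (V x) ^ ϱ)
          = χ1 * (ϱ - 1) * ((V x) ^ (1 - ϱ - 1) * (V x) ^ ϱ) := by ring
      rw [← Real.rpow_add hVx0] at heq
      have : (1 - ϱ - 1 + ϱ : ℝ) = 0 := by ring
      rw [this, Real.rpow_zero, mul_one] at heq
      linarith [key, heq.le]
    have hdiff : DifferentiableOn ℝ g (interior (Set.Icc t0 t1)) := by
      rw [interior_Icc]
      exact fun x hx => (hderiv x hx).differentiableAt.differentiableWithinAt
    have hmvt := (convex_Icc t0 t1).mul_sub_le_image_sub_of_le_deriv hgc hdiff hbound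
      t0 (Set.left_mem_Icc.2 ht01) t1 (Set.right_mem_Icc.2 ht01) ht01
    have hsub : χ1 * (ϱ - 1) * (t1 - t0) = 1 := by
      rw [ht1]
      rw [add_sub_cancel_left]
      exact mul_one_div_cancel hϱ1.ne'
    rw [hsub] at hmvt
    have hg0 : 0 < g t0 := Real.rpow_pos_of_pos (by linarith [hVpos t0 (Set.left_mem_Icc.2 ht01)]) _
    have hg1 : g t1 < 1 := Real.rpow_lt_one_of_one_lt_of_neg hVc (by linarith)
    linarith
  -- Phase 2: V T = 0
  have hphase2 : V T = 0 := by
    by_contra hVc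
    have hVT : 0 < V T := lt_of_le_of_ne (hVnonneg T (le_trans ht01 ht1T)) (Ne.symm hVc)
    have hVpos : ∀ x ∈ Set.Icc t1 T, 0 < V x := by
      intro x hx
      exact lt_of_lt_of_le hVT (hanti (Set.mem_Ici.2 (le_trans ht01 hx.1))
        (Set.mem_Ici.2 (le_trans ht01 ht1T)) hx.2)
    set h : ℝ → ℝ := fun t => (V t) ^ (1 - ς) with hh
    have hhc : ContinuousOn h (Set.Icc t1 T) := by
      intro x hx
      have hVx : V x ≠ 0 := ne_of_gt (hVpos x hx)
      exact ((Real.continuousAt_rpow_const (V x) (1 - ς) (Or.inl hVx)).comp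
        (hV.continuous.continuousAt)).continuousWithinAt
    have hderiv : ∀ x ∈ Set.Ioo t1 T, HasDerivAt h
        ((1 - ς) * (V x) ^ (1 - ς - 1) * deriv V x) x := by
      intro x hx
      have hVx : V x ≠ 0 := ne_of_gt (hVpos x (Set.mem_Icc_of_Ioo hx))
      exact (Real.hasDerivAt_rpow_const (Or.inl hVx)).comp x (hV x).hasDerivAt
    have hbound : ∀ x ∈ interior (Set.Icc t1 T), deriv h x ≤ -(χ2 * (1 - ς)) := by
      rw [interior_Icc]
      intro x hx
      rw [(hderiv x hx).deriv]
      have hVx0 : 0 < V x := hVpos x (Set.mem_Icc_of_Ioo hx)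
      have hx0 : t0 ≤ x := le_trans ht01 (le_of_lt hx.1)
      have hd := hineq x hx0
      have h3 : 0 ≤ (V x) ^ ϱ := Real.rpow_nonneg (le_of_lt hVx0) _
      have hd2 : deriv V x ≤ -χ2 * (V x) ^ ς := by nlinarith
      have hp : 0 < (V x) ^ (1 - ς - 1) := Real.rpow_pos_of_pos hVx0 _
      have hpos : 0 ≤ (1 - ς) * (V x) ^ (1 - ς - 1) := by nlinarith
      have key : (1 - ς) * (V x) ^ (1 - ς - 1) * deriv V x ≤
          (1 - ς) * (V x) ^ (1 - ς - 1) * (-χ2 * (V x) ^ ς) :=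
        mul_le_mul_of_nonneg_left hd2 hpos
      have heq : (1 - ς) * (V x) ^ (1 - ς - 1) * (-χ2 * (V x) ^ ς)
          = -(χ2 * (1 - ς)) * ((V x) ^ (1 - ς - 1) * (V x) ^ ς) := by ring
      rw [← Real.rpow_add hVx0] at heq
      have : (1 - ς - 1 + ς : ℝ) = 0 := by ring
      rw [this, Real.rpow_zero, mul_one] at heq
      linarith [key, heq.le]
    have hdiff : DifferentiableOn ℝ h (interior (Set.Icc t1 T)) := by
      rw [interior_Icc]
      exact fun x hx => (hderiv x hx).differentiableAt.differentiableWithinAt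
    have hmvt := (convex_Icc t1 T).image_sub_le_mul_sub_of_deriv_le hhc hdiff hbound
      t1 (Set.left_mem_Icc.2 ht1T) T (Set.right_mem_Icc.2 ht1T) ht1T
    have hsub : -(χ2 * (1 - ς)) * (T - t1) = -1 := by
      rw [hT]
      rw [add_sub_cancel_left, neg_mul, mul_one_div_cancel hς2.ne']
    rw [hsub] at hmvt
    have hh1 : h t1 ≤ 1 :=
      Real.rpow_le_one (hVnonneg t1 ht01) hphase1 (by linarith)
    have hhT : 0 < h T := Real.rpow_pos_of_pos hVT _
    linarith
  intro t ht
  have htT : T ≤ t := by rw [hT, ht1]; exact ht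
  have h1 : V t ≤ V T := hanti (Set.mem_Ici.2 (le_trans ht01 ht1T))
    (Set.mem_Ici.2 (le_trans (le_trans ht01 ht1T) htT)) htT
  have h2 : 0 ≤ V t := hVnonneg t (le_trans (le_trans ht01 ht1T) htT)
  linarith [hphase2 ▸ h1]
end

section
/- Let $t_0 \in \mathbb{R}$ and let $V : \mathbb{R} \to \mathbb{R}$ be differentiable with $V(t) \ge 0$ for all $t \ge t_0$ and $V(t_0) \le 1$. Suppose there are constants $\chi_2 > 0$ and $0 < \varsigma < 1$ such that $V'(t) \le -\chi_2 V(t)^{\varsigma}$ for all $t \ge t_0$. Then $V(t) = 0$ for every $t \ge t_0 + \frac{1}{\chi_2(1-\varsigma)}$. -/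
/-- Second phase of the fixed-time stability criterion: under the sublinear power
decay inequality, a Lyapunov function starting in the unit sublevel set reaches zero
in finite time bounded by `1 / (χ2 * (1 - ς))`. Powers are real powers (`rpow`). -/
theorem fixed_time_phase_two
    (t0 : ℝ) (V : ℝ → ℝ) (hV : Differentiable ℝ V)
    (hVnonneg : ∀ t, t0 ≤ t → 0 ≤ V t) (hV0 : V t0 ≤ 1)
    (χ2 ς : ℝ) (hχ2 : 0 < χ2) (hς0 : 0 < ς) (hς1 : ς < 1)
    (hineq : ∀ t, t0 ≤ t → deriv V t ≤ -χ2 * (V t) ^ ς) :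
    ∀ t, t0 + 1 / (χ2 * (1 - ς)) ≤ t → V t = 0 := by
  set c := χ2 * (1 - ς) with hc
  have hcpos : 0 < c := mul_pos hχ2 (by linarith)
  set T := t0 + 1 / c with hTdef
  have ht0T : t0 ≤ T := by
    have : 0 < 1 / c := by positivity
    simp [hTdef]; linarith
  -- V is antitone on [t0, ∞)
  have hVanti : AntitoneOn V (Set.Ici t0) := by
    apply antitoneOn_of_deriv_nonpos (convex_Ici t0) hV.continuous.continuousOn
      hV.differentiableOn
    intro x hx
    rw [interior_Ici] at hx
    have h1 := hineq x hx.le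
    have h0 : 0 ≤ (V x) ^ ς := Real.rpow_nonneg (hVnonneg x hx.le) ς
    nlinarith
  have hVT : V T = 0 := by
    by_contra h
    have hVTpos : 0 < V T := lt_of_le_of_ne (hVnonneg T ht0T) (Ne.symm h)
    have hpos : ∀ s ∈ Set.Icc t0 T, 0 < V s := fun s hs =>
      lt_of_lt_of_le hVTpos (hVanti (Set.mem_Ici.mpr hs.1) (Set.mem_Ici.mpr ht0T) hs.2)
    set g : ℝ → ℝ := fun s => V s ^ (1 - ς) + c * (s - t0) with hg
    have hgd : ∀ s ∈ Set.Ioo t0 T,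
        HasDerivAt g (deriv V s * (1 - ς) * V s ^ (1 - ς - 1) + c) s := by
      intro s hs
      have h1 : HasDerivAt (fun x => V x ^ (1 - ς))
          (deriv V s * (1 - ς) * V s ^ (1 - ς - 1)) s :=
        (hV s).hasDerivAt.rpow_const (Or.inl (ne_of_gt (hpos s (Set.mem_Icc_of_Ioo hs))))
      have h2 : HasDerivAt (fun x : ℝ => c * (x - t0)) (c * 1) s :=
        ((hasDerivAt_id s).sub_const t0).const_mul c
      exact (h1.add h2).congr_deriv (by ring)
    have hganti : AntitoneOn g (Set.Icc t0 T) := by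
      apply antitoneOn_of_deriv_nonpos (convex_Icc t0 T)
      · exact ((hV.continuous.rpow_const (fun x => Or.inr (by linarith))).add
          (continuous_const.mul (continuous_id.sub continuous_const))).continuousOn
      · intro x hx
        rw [interior_Icc] at hx
        exact (hgd x hx).differentiableAt.differentiableWithinAt
      · intro x hx
        rw [interior_Icc] at hx
        rw [(hgd x hx).deriv]
        have hVx : 0 < V x := hpos x (Set.mem_Icc_of_Ioo hx)
        have hderiv := hineq x hx.1.le
        have hrp : 0 < V x ^ (1 - ς - 1) := Real.rpow_pos_of_pos hVx _
        have key : V x ^ ς * V x ^ (1 - ς - 1) = 1 := by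
          rw [← Real.rpow_add hVx]
          norm_num
        have : deriv V x * (1 - ς) * V x ^ (1 - ς - 1) ≤
            -χ2 * V x ^ ς * (1 - ς) * V x ^ (1 - ς - 1) := by
          have h1ς : (0:ℝ) < 1 - ς := by linarith
          exact mul_le_mul_of_nonneg_right
            (mul_le_mul_of_nonneg_right hderiv h1ς.le) hrp.le
        calc deriv V x * (1 - ς) * V x ^ (1 - ς - 1) + c
            ≤ -χ2 * V x ^ ς * (1 - ς) * V x ^ (1 - ς - 1) + c := by linarith
          _ = -c * (V x ^ ς * V x ^ (1 - ς - 1)) + c := by ring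
          _ = 0 := by rw [key]; ring
    have hle : g T ≤ g t0 :=
      hganti (Set.left_mem_Icc.mpr ht0T) (Set.right_mem_Icc.mpr ht0T) ht0T
    have hgt0 : g t0 = V t0 ^ (1 - ς) := by simp [hg]
    have hgT : g T = V T ^ (1 - ς) + 1 := by
      simp only [hg, hTdef]
      rw [add_sub_cancel_left, mul_one_div_cancel (ne_of_gt hcpos)]
    have h01 : V t0 ^ (1 - ς) ≤ 1 :=
      Real.rpow_le_one (hVnonneg t0 le_rfl) hV0 (by linarith)
    have hTpow : 0 < V T ^ (1 - ς) := Real.rpow_pos_of_pos hVTpos _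
    rw [hgt0, hgT] at hle
    linarith
  intro t ht
  have hle : V t ≤ V T := hVanti (Set.mem_Ici.mpr ht0T) (Set.mem_Ici.mpr (ht0T.trans ht)) ht
  have := hVnonneg t (ht0T.trans ht)
  linarith [hVT ▸ hle]
end

section
/- Let $t_0 \in \mathbb{R}$ and let $V : \mathbb{R} \to \mathbb{R}$ be differentiable with $V(t) \ge 0$ for all $t \ge t_0$. Suppose there are constants $\chi_1 > 0$, $\chi_2 > 0$, $p > 1$, $0 < q < 1$ and $0 < \varphi < \infty$ such that $V'(t) \le -\chi_1 V(t)^{p} - \chi_2 V(t)^{q} + \varphi$ for all $t \ge t_0$. Then for every $\kappa$ with $0 < \kappa < 1$ and every $t \ge t_0 + \frac{1}{\chi_1 \kappa (p-1)} + \frac{1}{\chi_2 \kappa (1-q)}$ one has $V(t) \le \min\left\{ \left(\frac{\varphi}{(1-\kappa)\chi_1}\right)^{1/p},\ \left(\frac{\varphi}{(1-\kappa)\chi_2}\right)^{1/q} \right\}$. -/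
set_option maxHeartbeats 1000000


/-- Practical fixed-time stability (Lemma 2): a nonnegative differentiable Lyapunov
function satisfying the perturbed two-term power differential inequality enters a
residual set, determined by `φ, κ, χ1, χ2, p, q`, after a settling time independent
of its initial value. Powers are real powers (`rpow`). -/
theorem practical_fixed_time_stability
    (t0 : ℝ) (V : ℝ → ℝ) (hV : Differentiable ℝ V)
    (hVnonneg : ∀ t, t0 ≤ t → 0 ≤ V t)
    (χ1 χ2 p q φ : ℝ)
    (hχ1 : 0 < χ1) (hχ2 : 0 < χ2) (hp : 1 < p) (hq0 : 0 < q) (hq1 : q < 1)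
    (hφ : 0 < φ)
    (hineq : ∀ t, t0 ≤ t → deriv V t ≤ -χ1 * (V t) ^ p - χ2 * (V t) ^ q + φ) :
    ∀ κ : ℝ, 0 < κ → κ < 1 →
      ∀ t, t0 + 1 / (χ1 * κ * (p - 1)) + 1 / (χ2 * κ * (1 - q)) ≤ t →
        V t ≤ min ((φ / ((1 - κ) * χ1)) ^ (1 / p)) ((φ / ((1 - κ) * χ2)) ^ (1 / q)) := by
  intro κ hκ0 hκ1 t ht
  have hκ' : (0:ℝ) < 1 - κ := by linarith
  have hp0 : (0:ℝ) < p := by linarith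
  have hq' : (0:ℝ) < 1 - q := by linarith
  set B1 := (φ / ((1 - κ) * χ1)) ^ (1 / p) with hB1def
  set B2 := (φ / ((1 - κ) * χ2)) ^ (1 / q) with hB2def
  have hd1 : 0 < φ / ((1 - κ) * χ1) := div_pos hφ (mul_pos hκ' hχ1)
  have hd2 : 0 < φ / ((1 - κ) * χ2) := div_pos hφ (mul_pos hκ' hχ2)
  have hB1pos : 0 < B1 := Real.rpow_pos_of_pos hd1 _
  have hB2pos : 0 < B2 := Real.rpow_pos_of_pos hd2 _
  set B := min B1 B2 with hBdef
  have hBpos : 0 < B := lt_min hB1pos hB2pos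
  -- the key pointwise derivative bound
  have hkey : ∀ u, t0 ≤ u → B ≤ V u →
      deriv V u ≤ -(κ * χ1 * V u ^ p) - κ * χ2 * V u ^ q := by
    intro u hu hBu
    have hVu : 0 ≤ V u := hVnonneg u hu
    have hVp : 0 ≤ V u ^ p := Real.rpow_nonneg hVu _
    have hVq : 0 ≤ V u ^ q := Real.rpow_nonneg hVu _
    have hmain := hineq u hu
    have hφle : φ ≤ (1 - κ) * χ1 * V u ^ p + (1 - κ) * χ2 * V u ^ q := by
      rcases min_le_iff.mp (hBdef ▸ hBu) with h | h
      · -- B1 ≤ V u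
        have h1 : B1 ^ p ≤ V u ^ p := Real.rpow_le_rpow hB1pos.le h hp0.le
        have h2 : B1 ^ p = φ / ((1 - κ) * χ1) := by
          rw [hB1def, ← Real.rpow_mul hd1.le, one_div_mul_cancel (ne_of_gt hp0), Real.rpow_one]
        have h3 : φ / ((1 - κ) * χ1) ≤ V u ^ p := h2 ▸ h1
        have h4 : φ ≤ (1 - κ) * χ1 * V u ^ p :=
          (div_le_iff₀' (mul_pos hκ' hχ1)).mp h3
        nlinarith [mul_nonneg (mul_nonneg hκ'.le hχ2.le) hVq]
      · -- B2 ≤ V u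
        have h1 : B2 ^ q ≤ V u ^ q := Real.rpow_le_rpow hB2pos.le h hq0.le
        have h2 : B2 ^ q = φ / ((1 - κ) * χ2) := by
          rw [hB2def, ← Real.rpow_mul hd2.le, one_div_mul_cancel (ne_of_gt hq0), Real.rpow_one]
        have h3 : φ / ((1 - κ) * χ2) ≤ V u ^ q := h2 ▸ h1
        have h4 : φ ≤ (1 - κ) * χ2 * V u ^ q :=
          (div_le_iff₀' (mul_pos hκ' hχ2)).mp h3
        nlinarith [mul_nonneg (mul_nonneg hκ'.le hχ1.le) hVp]
    nlinarith
  -- invariance: once below B, stays below B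
  have hinv : ∀ s, t0 ≤ s → V s ≤ B → ∀ u, s ≤ u → V u ≤ B := by
    intro s hs hVs u hsu
    have hcont : ContinuousOn V (Set.Icc s u) := hV.continuous.continuousOn
    have hderiv : ∀ x ∈ Set.Ico s u, HasDerivWithinAt V (deriv V x) (Set.Ici x) x :=
      fun x _ => (hV x).hasDerivAt.hasDerivWithinAt
    have hbound : ∀ x ∈ Set.Ico s u, V x = (fun _ : ℝ => B) x → deriv V x < (fun _ : ℝ => 0) x := by
      intro x hx hVx
      simp only at hVx ⊢
      have hx0 : t0 ≤ x := hs.trans hx.1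
      have h1 := hkey x hx0 (le_of_eq hVx.symm)
      have h2 : 0 < V x ^ p := Real.rpow_pos_of_pos (hVx ▸ hBpos) _
      have h3 : 0 < V x ^ q := Real.rpow_pos_of_pos (hVx ▸ hBpos) _
      nlinarith [mul_pos (mul_pos hκ0 hχ1) h2, mul_pos (mul_pos hκ0 hχ2) h3]
    have := image_le_of_deriv_right_lt_deriv_boundary (B := fun _ => B) (B' := fun _ => 0)
      hcont hderiv hVs (fun x => hasDerivAt_const x B) hbound
    exact this ⟨hsu, le_refl u⟩
  -- settling-time constants
  set T1 := 1 / (χ1 * κ * (p - 1)) with hT1def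
  set T2 := 1 / (χ2 * κ * (1 - q)) with hT2def
  have hT1pos : 0 < T1 := by
    apply one_div_pos.mpr; exact mul_pos (mul_pos hχ1 hκ0) (by linarith)
  have hT2pos : 0 < T2 := by
    apply one_div_pos.mpr; exact mul_pos (mul_pos hχ2 hκ0) hq'
  set t1 := t0 + T1 with ht1def
  set T := t0 + T1 + T2 with hTdef
  have ht0t1 : t0 ≤ t1 := by rw [ht1def]; linarith
  have ht1T : t1 ≤ T := by rw [hTdef, ht1def]; linarith
  have ht0T : t0 ≤ T := ht0t1.trans ht1T
  -- reaching the residual set within the settling time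
  have hreach : ∃ s ∈ Set.Icc t0 T, V s ≤ B := by
    by_contra hcon
    push_neg at hcon
    have hVpos : ∀ u ∈ Set.Icc t0 T, 0 < V u := fun u hu => hBpos.trans (hcon u hu)
    have hVderiv1 : ∀ x ∈ Set.Icc t0 T, deriv V x ≤ -(κ * χ1 * V x ^ p) := by
      intro x hx
      have := hkey x hx.1 (hcon x hx).le
      have hVq : 0 ≤ V x ^ q := Real.rpow_nonneg (hVnonneg x hx.1) _
      nlinarith [mul_nonneg (mul_nonneg hκ0.le hχ2.le) hVq]
    have hVderiv2 : ∀ x ∈ Set.Icc t0 T, deriv V x ≤ -(κ * χ2 * V x ^ q) := by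
      intro x hx
      have := hkey x hx.1 (hcon x hx).le
      have hVp : 0 ≤ V x ^ p := Real.rpow_nonneg (hVnonneg x hx.1) _
      nlinarith [mul_nonneg (mul_nonneg hκ0.le hχ1.le) hVp]
    -- Phase 1 : on [t0, t1], W = V^(1-p) increases at rate ≥ κχ1(p-1), so V t1 ≤ 1
    have hVt1le1 : V t1 ≤ 1 := by
      have hsub : Set.Icc t0 t1 ⊆ Set.Icc t0 T := Set.Icc_subset_Icc le_rfl ht1T
      set g : ℝ → ℝ := fun u => V u ^ (1 - p) - χ1 * κ * (p - 1) * u with hgdef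
      have hgmono : MonotoneOn g (Set.Icc t0 t1) := by
        apply monotoneOn_of_deriv_nonneg (convex_Icc t0 t1)
        · apply ContinuousOn.sub
          · exact ContinuousOn.rpow_const hV.continuous.continuousOn
              (fun x hx => Or.inl (ne_of_gt (hVpos x (hsub hx))))
          · exact (continuous_const.mul continuous_id).continuousOn
        · intro x hx
          rw [interior_Icc] at hx
          have hxI : x ∈ Set.Icc t0 T := hsub ⟨hx.1.le, hx.2.le⟩
          have hW : HasDerivAt (fun u => V u ^ (1 - p))
              (deriv V x * (1 - p) * V x ^ (1 - p - 1)) x :=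
            (hV x).hasDerivAt.rpow_const (Or.inl (ne_of_gt (hVpos x hxI)))
          have hlin : HasDerivAt (fun u => χ1 * κ * (p - 1) * u) (χ1 * κ * (p - 1)) x := by
            simpa using (hasDerivAt_id x).const_mul (χ1 * κ * (p - 1))
          exact ((hW.sub hlin).differentiableAt).differentiableWithinAt
        · intro x hx
          rw [interior_Icc] at hx
          have hxI : x ∈ Set.Icc t0 T := hsub ⟨hx.1.le, hx.2.le⟩
          have hxpos : 0 < V x := hVpos x hxI
          have hW : HasDerivAt (fun u => V u ^ (1 - p))
              (deriv V x * (1 - p) * V x ^ (1 - p - 1)) x :=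
            (hV x).hasDerivAt.rpow_const (Or.inl (ne_of_gt hxpos))
          have hlin : HasDerivAt (fun u => χ1 * κ * (p - 1) * u) (χ1 * κ * (p - 1)) x := by
            simpa using (hasDerivAt_id x).const_mul (χ1 * κ * (p - 1))
          have hg : HasDerivAt g
              (deriv V x * (1 - p) * V x ^ (1 - p - 1) - χ1 * κ * (p - 1)) x :=
            hW.sub hlin
          rw [hg.deriv]
          have hexp : (1 : ℝ) - p - 1 = -p := by ring
          rw [hexp]
          have hA : 0 < V x ^ (-p) := Real.rpow_pos_of_pos hxpos _
          have hAP : V x ^ p * V x ^ (-p) = 1 := by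
            rw [← Real.rpow_add hxpos]; simp
          have h1 := hVderiv1 x hxI
          have h2 : deriv V x * V x ^ (-p) ≤ -(κ * χ1 * V x ^ p) * V x ^ (-p) :=
            mul_le_mul_of_nonneg_right h1 hA.le
          have h3 : deriv V x * V x ^ (-p) ≤ -(κ * χ1) := by
            calc deriv V x * V x ^ (-p) ≤ -(κ * χ1 * V x ^ p) * V x ^ (-p) := h2
              _ = -(κ * χ1) * (V x ^ p * V x ^ (-p)) := by ring
              _ = -(κ * χ1) := by rw [hAP]; ring
          have h4 : (1 - p) * (-(κ * χ1)) ≤ (1 - p) * (deriv V x * V x ^ (-p)) :=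
            mul_le_mul_of_nonpos_left h3 (by linarith)
          have h5 : deriv V x * (1 - p) * V x ^ (-p) =
              (1 - p) * (deriv V x * V x ^ (-p)) := by ring
          rw [h5]
          nlinarith
      have hgle := hgmono (Set.left_mem_Icc.mpr ht0t1) (Set.right_mem_Icc.mpr ht0t1) ht0t1
      have hc : χ1 * κ * (p - 1) * T1 = 1 := by
        have hne : χ1 * κ * (p - 1) ≠ 0 := ne_of_gt (mul_pos (mul_pos hχ1 hκ0) (by linarith))
        rw [hT1def, mul_one_div, div_self hne]
      have hW0 : 0 < V t0 ^ (1 - p) :=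
        Real.rpow_pos_of_pos (hVpos t0 (Set.left_mem_Icc.mpr ht0T)) _
      have hWt1 : 1 ≤ V t1 ^ (1 - p) := by
        simp only [hgdef, ht1def] at hgle
        nlinarith
      by_contra h
      push_neg at h
      have : V t1 ^ (1 - p) < 1 :=
        Real.rpow_lt_one_of_one_lt_of_neg h (by linarith)
      linarith
    -- Phase 2 : on [t1, T], U = V^(1-q) decreases at rate ≥ κχ2(1-q), contradiction
    have hsub2 : Set.Icc t1 T ⊆ Set.Icc t0 T := Set.Icc_subset_Icc ht0t1 le_rfl
    set g2 : ℝ → ℝ := fun u => V u ^ (1 - q) + χ2 * κ * (1 - q) * u with hg2def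
    have hganti : AntitoneOn g2 (Set.Icc t1 T) := by
      apply antitoneOn_of_deriv_nonpos (convex_Icc t1 T)
      · apply ContinuousOn.add
        · exact ContinuousOn.rpow_const hV.continuous.continuousOn
            (fun x hx => Or.inl (ne_of_gt (hVpos x (hsub2 hx))))
        · exact (continuous_const.mul continuous_id).continuousOn
      · intro x hx
        rw [interior_Icc] at hx
        have hxI : x ∈ Set.Icc t0 T := hsub2 ⟨hx.1.le, hx.2.le⟩
        have hU : HasDerivAt (fun u => V u ^ (1 - q))
            (deriv V x * (1 - q) * V x ^ (1 - q - 1)) x :=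
          (hV x).hasDerivAt.rpow_const (Or.inl (ne_of_gt (hVpos x hxI)))
        have hlin : HasDerivAt (fun u => χ2 * κ * (1 - q) * u) (χ2 * κ * (1 - q)) x := by
          simpa using (hasDerivAt_id x).const_mul (χ2 * κ * (1 - q))
        exact ((hU.add hlin).differentiableAt).differentiableWithinAt
      · intro x hx
        rw [interior_Icc] at hx
        have hxI : x ∈ Set.Icc t0 T := hsub2 ⟨hx.1.le, hx.2.le⟩
        have hxpos : 0 < V x := hVpos x hxI
        have hU : HasDerivAt (fun u => V u ^ (1 - q))
            (deriv V x * (1 - q) * V x ^ (1 - q - 1)) x :=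
          (hV x).hasDerivAt.rpow_const (Or.inl (ne_of_gt hxpos))
        have hlin : HasDerivAt (fun u => χ2 * κ * (1 - q) * u) (χ2 * κ * (1 - q)) x := by
          simpa using (hasDerivAt_id x).const_mul (χ2 * κ * (1 - q))
        have hg : HasDerivAt g2
            (deriv V x * (1 - q) * V x ^ (1 - q - 1) + χ2 * κ * (1 - q)) x :=
          hU.add hlin
        rw [hg.deriv]
        have hexp : (1 : ℝ) - q - 1 = -q := by ring
        rw [hexp]
        have hA : 0 < V x ^ (-q) := Real.rpow_pos_of_pos hxpos _
        have hAP : V x ^ q * V x ^ (-q) = 1 := by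
          rw [← Real.rpow_add hxpos]; simp
        have h1 := hVderiv2 x hxI
        have h2 : deriv V x * V x ^ (-q) ≤ -(κ * χ2 * V x ^ q) * V x ^ (-q) :=
          mul_le_mul_of_nonneg_right h1 hA.le
        have h3 : deriv V x * V x ^ (-q) ≤ -(κ * χ2) := by
          calc deriv V x * V x ^ (-q) ≤ -(κ * χ2 * V x ^ q) * V x ^ (-q) := h2
            _ = -(κ * χ2) * (V x ^ q * V x ^ (-q)) := by ring
            _ = -(κ * χ2) := by rw [hAP]; ring
        have h4 : (1 - q) * (deriv V x * V x ^ (-q)) ≤ (1 - q) * (-(κ * χ2)) :=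
          mul_le_mul_of_nonneg_left h3 (by linarith)
        have h5 : deriv V x * (1 - q) * V x ^ (-q) =
            (1 - q) * (deriv V x * V x ^ (-q)) := by ring
        rw [h5]
        nlinarith
    have hgle := hganti (Set.left_mem_Icc.mpr ht1T) (Set.right_mem_Icc.mpr ht1T) ht1T
    have hc : χ2 * κ * (1 - q) * T2 = 1 := by
      have hne : χ2 * κ * (1 - q) ≠ 0 := ne_of_gt (mul_pos (mul_pos hχ2 hκ0) hq')
      rw [hT2def, mul_one_div, div_self hne]
    have hUt1 : V t1 ^ (1 - q) ≤ 1 :=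
      Real.rpow_le_one (hVnonneg t1 ht0t1) hVt1le1 (by linarith)
    have hUT : 0 < V T ^ (1 - q) :=
      Real.rpow_pos_of_pos (hVpos T (Set.right_mem_Icc.mpr ht0T)) _
    simp only [hg2def, hTdef, ht1def] at hgle
    nlinarith
  obtain ⟨s, hs, hVsB⟩ := hreach
  have hTt : T ≤ t := by rw [hTdef]; exact ht
  exact hinv s hs.1 hVsB t (hs.2.trans hTt)
end

section
/- Let $t_0 \in \mathbb{R}$ and let $V : \mathbb{R} \to \mathbb{R}$ be differentiable with $V(t) \ge 0$ for all $t \ge t_0$. Suppose there are constants $\zeta_1 > 0$, $\zeta_2 > 0$, $0 < \gamma < 1$ and $\iota > 1$ such that $V'(t) \le -2^{\frac{\gamma+1}{2}} \zeta_1 V(t)^{\frac{\gamma+1}{2}} - 2^{\frac{\iota+1}{2}} \zeta_2 V(t)^{\frac{\iota+1}{2}}$ for all $t \ge t_0$. Then $V(t) = 0$ for every $t \ge t_0 + \frac{2}{\zeta_1 2^{\frac{\gamma+1}{2}}(1-\gamma)} + \frac{2}{\zeta_2 2^{\frac{\iota+1}{2}}(\iota-1)}$. -/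
set_option maxHeartbeats 1000000

/-- Mean value comparison: if `F` is continuous on `[a,b]` and at each interior
point has some derivative `≤ -k`, then `F b ≤ F a - k (b - a)`. -/
lemma decrease_aux (F : ℝ → ℝ) (a b k : ℝ) (hab : a ≤ b)
    (hcont : ContinuousOn F (Set.Icc a b))
    (hder : ∀ t ∈ Set.Ioo a b, ∃ d, HasDerivAt F d t ∧ d ≤ -k) :
    F b ≤ F a - k * (b - a) := by
  set G : ℝ → ℝ := fun t => F t + k * t with hGdef
  have hGc : ContinuousOn G (Set.Icc a b) :=
    hcont.add ((continuous_const.mul continuous_id).continuousOn)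
  have hGd : ∀ t ∈ Set.Ioo a b, HasDerivAt G (deriv G t) t ∧ deriv G t ≤ 0 := by
    intro t ht
    obtain ⟨d, hd, hdk⟩ := hder t ht
    have h2 : HasDerivAt (fun y : ℝ => k * y) (k * 1) t :=
      (hasDerivAt_id t).const_mul k
    have hG : HasDerivAt G (d + k * 1) t := hd.add h2
    refine ⟨hG.deriv ▸ hG, ?_⟩
    rw [hG.deriv]; linarith
  have hA : AntitoneOn G (Set.Icc a b) := by
    apply antitoneOn_of_deriv_nonpos (convex_Icc a b) hGc
    · intro t ht
      rw [interior_Icc] at ht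
      exact ((hGd t ht).1).differentiableAt.differentiableWithinAt
    · intro t ht
      rw [interior_Icc] at ht
      exact (hGd t ht).2
  have := hA (Set.left_mem_Icc.2 hab) (Set.right_mem_Icc.2 hab) hab
  simp only [hGdef] at this
  linarith

/-- Settling-time estimate for the composite Lyapunov function of the fixed-time
backstepping sliding mode controller (equations (B13)-(B14)). Powers are real
powers (`rpow`). -/
theorem backstepping_settling_time
    (t0 : ℝ) (V : ℝ → ℝ) (hV : Differentiable ℝ V)
    (hVnonneg : ∀ t, t0 ≤ t → 0 ≤ V t)
    (ζ1 ζ2 γ ι : ℝ)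
    (hζ1 : 0 < ζ1) (hζ2 : 0 < ζ2) (hγ0 : 0 < γ) (hγ1 : γ < 1) (hι : 1 < ι)
    (hineq : ∀ t, t0 ≤ t →
      deriv V t ≤ -(2 : ℝ) ^ ((γ + 1) / 2) * ζ1 * (V t) ^ ((γ + 1) / 2)
        - (2 : ℝ) ^ ((ι + 1) / 2) * ζ2 * (V t) ^ ((ι + 1) / 2)) :
    ∀ t, t0 + 2 / (ζ1 * (2 : ℝ) ^ ((γ + 1) / 2) * (1 - γ))
        + 2 / (ζ2 * (2 : ℝ) ^ ((ι + 1) / 2) * (ι - 1)) ≤ t → V t = 0 := by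
  obtain ⟨α, hαdef⟩ : ∃ a : ℝ, a = (γ + 1) / 2 := ⟨_, rfl⟩
  obtain ⟨β, hβdef⟩ : ∃ a : ℝ, a = (ι + 1) / 2 := ⟨_, rfl⟩
  have hα0 : 0 < α := by rw [hαdef]; linarith
  have hα1 : α < 1 := by rw [hαdef]; linarith
  have hβ1 : 1 < β := by rw [hβdef]; linarith
  have h2α : (0 : ℝ) < (2 : ℝ) ^ α := Real.rpow_pos_of_pos two_pos α
  have h2β : (0 : ℝ) < (2 : ℝ) ^ β := Real.rpow_pos_of_pos two_pos β
  obtain ⟨c1, hc1def⟩ : ∃ c : ℝ, c = (2 : ℝ) ^ α * ζ1 := ⟨_, rfl⟩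
  obtain ⟨c2, hc2def⟩ : ∃ c : ℝ, c = (2 : ℝ) ^ β * ζ2 := ⟨_, rfl⟩
  have hc1 : 0 < c1 := hc1def ▸ mul_pos h2α hζ1
  have hc2 : 0 < c2 := hc2def ▸ mul_pos h2β hζ2
  have h1α : 0 < 1 - α := by linarith
  have hβ1' : 0 < β - 1 := by linarith
  obtain ⟨Tα, hTαdef⟩ : ∃ a : ℝ, a = 1 / (c1 * (1 - α)) := ⟨_, rfl⟩
  obtain ⟨Tβ, hTβdef⟩ : ∃ a : ℝ, a = 1 / (c2 * (β - 1)) := ⟨_, rfl⟩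
  have hTα : 0 < Tα := hTαdef ▸ div_pos one_pos (mul_pos hc1 h1α)
  have hTβ : 0 < Tβ := hTβdef ▸ div_pos one_pos (mul_pos hc2 hβ1')
  have hineq' : ∀ t, t0 ≤ t → deriv V t ≤ -c1 * V t ^ α - c2 * V t ^ β := by
    intro t ht
    have h := hineq t ht
    rw [← hαdef, ← hβdef] at h
    rw [hc1def, hc2def]
    linarith
  have hkα : c1 * (1 - α) * Tα = 1 := by
    rw [hTαdef]
    field_simp
  have hkβ : c2 * (β - 1) * Tβ = 1 := by
    rw [hTβdef]
    field_simp
  -- identify the claimed times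
  have hEα : 2 / (ζ1 * (2 : ℝ) ^ ((γ + 1) / 2) * (1 - γ)) = Tα := by
    have h2 : (2 : ℝ) ^ ((γ + 1) / 2) = (2 : ℝ) ^ α := by rw [hαdef]
    rw [hTαdef, hc1def, h2]
    rw [div_eq_div_iff (ne_of_gt (mul_pos (mul_pos hζ1 h2α)
      (show (0:ℝ) < 1 - γ by linarith))) (ne_of_gt (mul_pos (mul_pos h2α hζ1) h1α))]
    rw [hαdef]; ring
  have hEβ : 2 / (ζ2 * (2 : ℝ) ^ ((ι + 1) / 2) * (ι - 1)) = Tβ := by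
    have h2 : (2 : ℝ) ^ ((ι + 1) / 2) = (2 : ℝ) ^ β := by rw [hβdef]
    rw [hTβdef, hc2def, h2]
    rw [div_eq_div_iff (ne_of_gt (mul_pos (mul_pos hζ2 h2β)
      (show (0:ℝ) < ι - 1 by linarith))) (ne_of_gt (mul_pos (mul_pos h2β hζ2) hβ1'))]
    rw [hβdef]; ring
  -- V is antitone on [t0, ∞)
  have hanti : AntitoneOn V (Set.Ici t0) := by
    apply antitoneOn_of_deriv_nonpos (convex_Ici t0) hV.continuous.continuousOn
      (hV.differentiableOn)
    intro t ht
    rw [interior_Ici] at ht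
    have ht0 : t0 ≤ t := le_of_lt ht
    have h1 : 0 ≤ V t ^ α := Real.rpow_nonneg (hVnonneg t ht0) α
    have h2 : 0 ≤ V t ^ β := Real.rpow_nonneg (hVnonneg t ht0) β
    have := hineq' t ht0
    nlinarith
  intro t ht
  rw [hEα, hEβ] at ht
  -- Phase 1: V reaches 1 by time t0 + Tβ
  have hA : ∃ t1 ∈ Set.Icc t0 (t0 + Tβ), V t1 ≤ 1 := by
    by_contra h
    push_neg at h
    have hVpos : ∀ s ∈ Set.Icc t0 (t0 + Tβ), (0 : ℝ) < V s := fun s hs =>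
      lt_trans one_pos (h s hs)
    have hab : t0 ≤ t0 + Tβ := by linarith
    have hcont : ContinuousOn (fun s => -(V s ^ (1 - β))) (Set.Icc t0 (t0 + Tβ)) := by
      apply ContinuousOn.neg
      exact hV.continuous.continuousOn.rpow_const
        (fun x hx => Or.inl (ne_of_gt (hVpos x hx)))
    have key : -(V (t0 + Tβ) ^ (1 - β)) ≤ -(V t0 ^ (1 - β))
        - c2 * (β - 1) * (t0 + Tβ - t0) := by
      refine decrease_aux (fun s => -(V s ^ (1 - β))) t0 (t0 + Tβ) (c2 * (β - 1))
        hab hcont ?_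
      intro s hs
      have hs' : s ∈ Set.Icc t0 (t0 + Tβ) := Set.Ioo_subset_Icc_self hs
      have hVs : 0 < V s := hVpos s hs'
      have hs0 : t0 ≤ s := hs'.1
      have hd : HasDerivAt (fun y => V y ^ (1 - β))
          (deriv V s * (1 - β) * V s ^ (1 - β - 1)) s :=
        ((hV s).hasDerivAt).rpow_const (Or.inl (ne_of_gt hVs))
      refine ⟨-(deriv V s * (1 - β) * V s ^ (1 - β - 1)), hd.neg, ?_⟩
      have hderiv := hineq' s hs0
      have hC : (0 : ℝ) < V s ^ (1 - β - 1) := Real.rpow_pos_of_pos hVs _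
      have hA' : (0 : ℝ) ≤ V s ^ α := Real.rpow_nonneg (le_of_lt hVs) α
      have hBC : V s ^ β * V s ^ (1 - β - 1) = 1 := by
        have hadd : β + (1 - β - 1) = 0 := by ring
        rw [← Real.rpow_add hVs, hadd, Real.rpow_zero]
      have hmul := mul_le_mul_of_nonneg_right hderiv (le_of_lt hC)
      have h1 : deriv V s * V s ^ (1 - β - 1) ≤ -c2 := by
        have hac : 0 ≤ c1 * (V s ^ α * V s ^ (1 - β - 1)) :=
          mul_nonneg (le_of_lt hc1) (mul_nonneg hA' (le_of_lt hC))
        calc deriv V s * V s ^ (1 - β - 1)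
            ≤ (-c1 * V s ^ α - c2 * V s ^ β) * V s ^ (1 - β - 1) := hmul
          _ = -(c1 * (V s ^ α * V s ^ (1 - β - 1)))
              - c2 * (V s ^ β * V s ^ (1 - β - 1)) := by ring
          _ = -(c1 * (V s ^ α * V s ^ (1 - β - 1))) - c2 := by rw [hBC]; ring
          _ ≤ -c2 := by linarith
      have h2 := mul_le_mul_of_nonneg_right h1 (le_of_lt hβ1')
      nlinarith [h2]
    have hrw : c2 * (β - 1) * (t0 + Tβ - t0) = 1 := by
      rw [show t0 + Tβ - t0 = Tβ by ring]; exact hkβ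
    rw [hrw] at key
    have hWb : V (t0 + Tβ) ^ (1 - β) ≤ 1 :=
      Real.rpow_le_one_of_one_le_of_nonpos
        (le_of_lt (h (t0 + Tβ) (Set.right_mem_Icc.2 hab))) (by linarith)
    have hWa : 0 < V t0 ^ (1 - β) :=
      Real.rpow_pos_of_pos (hVpos t0 (Set.left_mem_Icc.2 hab)) _
    linarith
  obtain ⟨t1, ht1mem, hVt1⟩ := hA
  -- Phase 2: V reaches 0 by time t1 + Tα
  have hB : ∃ s ∈ Set.Icc t1 (t1 + Tα), V s ≤ 0 := by
    by_contra h
    push_neg at h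
    have hab : t1 ≤ t1 + Tα := by linarith
    have hcont : ContinuousOn (fun s => V s ^ (1 - α)) (Set.Icc t1 (t1 + Tα)) :=
      hV.continuous.continuousOn.rpow_const (fun x hx => Or.inl (ne_of_gt (h x hx)))
    have key : V (t1 + Tα) ^ (1 - α) ≤ V t1 ^ (1 - α)
        - c1 * (1 - α) * (t1 + Tα - t1) := by
      refine decrease_aux (fun s => V s ^ (1 - α)) t1 (t1 + Tα) (c1 * (1 - α))
        hab hcont ?_
      intro s hs
      have hs' : s ∈ Set.Icc t1 (t1 + Tα) := Set.Ioo_subset_Icc_self hs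
      have hVs : 0 < V s := h s hs'
      have hs0 : t0 ≤ s := le_trans ht1mem.1 hs'.1
      have hd : HasDerivAt (fun y => V y ^ (1 - α))
          (deriv V s * (1 - α) * V s ^ (1 - α - 1)) s :=
        ((hV s).hasDerivAt).rpow_const (Or.inl (ne_of_gt hVs))
      refine ⟨deriv V s * (1 - α) * V s ^ (1 - α - 1), hd, ?_⟩
      have hderiv := hineq' s hs0
      have hC : (0 : ℝ) < V s ^ (1 - α - 1) := Real.rpow_pos_of_pos hVs _
      have hB' : (0 : ℝ) ≤ V s ^ β := Real.rpow_nonneg (le_of_lt hVs) β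
      have hAC : V s ^ α * V s ^ (1 - α - 1) = 1 := by
        have hadd : α + (1 - α - 1) = 0 := by ring
        rw [← Real.rpow_add hVs, hadd, Real.rpow_zero]
      have hmul := mul_le_mul_of_nonneg_right hderiv (le_of_lt hC)
      have h1 : deriv V s * V s ^ (1 - α - 1) ≤ -c1 := by
        have hbc : 0 ≤ c2 * (V s ^ β * V s ^ (1 - α - 1)) :=
          mul_nonneg (le_of_lt hc2) (mul_nonneg hB' (le_of_lt hC))
        calc deriv V s * V s ^ (1 - α - 1)
            ≤ (-c1 * V s ^ α - c2 * V s ^ β) * V s ^ (1 - α - 1) := hmul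
          _ = -(c1 * (V s ^ α * V s ^ (1 - α - 1)))
              - c2 * (V s ^ β * V s ^ (1 - α - 1)) := by ring
          _ = -c1 - c2 * (V s ^ β * V s ^ (1 - α - 1)) := by rw [hAC]; ring
          _ ≤ -c1 := by linarith
      have h2 := mul_le_mul_of_nonneg_right h1 (le_of_lt h1α)
      nlinarith [h2]
    have hrw : c1 * (1 - α) * (t1 + Tα - t1) = 1 := by
      rw [show t1 + Tα - t1 = Tα by ring]; exact hkα
    rw [hrw] at key
    have hUa : V t1 ^ (1 - α) ≤ 1 :=
      Real.rpow_le_one (hVnonneg t1 ht1mem.1) hVt1 (by linarith)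
    have hUb : 0 < V (t1 + Tα) ^ (1 - α) :=
      Real.rpow_pos_of_pos (h (t1 + Tα) (Set.right_mem_Icc.2 hab)) _
    linarith
  obtain ⟨s, hsmem, hVs0⟩ := hB
  have hs0 : t0 ≤ s := le_trans ht1mem.1 hsmem.1
  have hVseq : V s = 0 := le_antisymm hVs0 (hVnonneg s hs0)
  have hst : s ≤ t := by
    have h1 : s ≤ t1 + Tα := hsmem.2
    have h2 : t1 ≤ t0 + Tβ := ht1mem.2
    linarith
  have hVt : V t ≤ V s := hanti (Set.mem_Ici.2 hs0) (Set.mem_Ici.2 (le_trans hs0 hst)) hst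
  have := hVnonneg t (le_trans hs0 hst)
  linarith [hVseq ▸ hVt]
end

section
/- Let $t_0 \in \mathbb{R}$ and let $V : \mathbb{R} \to \mathbb{R}$ be differentiable with $V(t) \ge 0$ for all $t \ge t_0$. Suppose there are constants $\chi_1 > 0$, $\chi_2 > 0$, $0 < \gamma < 1$, $\iota > 1$ and $\sigma > 0$ such that $V'(t) \le -2^{\frac{\gamma+1}{2}} \chi_1 V(t)^{\frac{\gamma+1}{2}} - 2^{\frac{\iota+1}{2}} \chi_2 V(t)^{\frac{\iota+1}{2}} + \sigma$ for all $t \ge t_0$. Then for every $\kappa$ with $0 < \kappa < 1$ and every $t \ge t_0 + \frac{2}{\chi_1 2^{\frac{\gamma+1}{2}} \kappa (1-\gamma)} + \frac{2}{\chi_2 2^{\frac{\iota+1}{2}} \kappa (\iota-1)}$ one has $V(t) \le \min\left\{ \left(\frac{\sigma}{(1-\kappa) 2^{\frac{\gamma+1}{2}} \chi_1}\right)^{\frac{2}{\gamma+1}},\ \left(\frac{\sigma}{(1-\kappa) 2^{\frac{\iota+1}{2}} \chi_2}\right)^{\frac{2}{\iota+1}} \right\}$. -/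
open Set

/-- If `f` has derivative `f' u ≥ c` at every point of `[x,y]`, then
`f x + c * (y - x) ≤ f y`. -/
lemma deriv_lower_bound_aux {f f' : ℝ → ℝ} {x y c : ℝ} (hxy : x ≤ y)
    (hf : ∀ u ∈ Set.Icc x y, HasDerivAt f (f' u) u)
    (hc : ∀ u ∈ Set.Icc x y, c ≤ f' u) :
    f x + c * (y - x) ≤ f y := by
  set g : ℝ → ℝ := fun u => f u - c * u with hg
  have hg' : ∀ u ∈ Set.Icc x y, HasDerivAt g (f' u - c) u := by
    intro u hu
    exact (hf u hu).sub (by simpa using (hasDerivAt_id u).const_mul c)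
  have hmono : MonotoneOn g (Set.Icc x y) := by
    apply monotoneOn_of_deriv_nonneg (convex_Icc x y)
    · exact fun u hu => (hg' u hu).continuousAt.continuousWithinAt
    · intro u hu
      exact ((hg' u (interior_subset hu)).differentiableAt).differentiableWithinAt
    · intro u hu
      rw [(hg' u (interior_subset hu)).deriv]
      linarith [hc u (interior_subset hu)]
  have h := hmono (Set.left_mem_Icc.2 hxy) (Set.right_mem_Icc.2 hxy) hxy
  simp only [hg] at h
  linarith

/-- If `f` has derivative `f' u ≤ c` at every point of `[x,y]`, then
`f y ≤ f x + c * (y - x)`. -/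
lemma deriv_upper_bound_aux {f f' : ℝ → ℝ} {x y c : ℝ} (hxy : x ≤ y)
    (hf : ∀ u ∈ Set.Icc x y, HasDerivAt f (f' u) u)
    (hc : ∀ u ∈ Set.Icc x y, f' u ≤ c) :
    f y ≤ f x + c * (y - x) := by
  have h := deriv_lower_bound_aux (f := fun u => -f u) (f' := fun u => -f' u)
    (c := -c) hxy (fun u hu => (hf u hu).neg)
    (fun u hu => by simpa using neg_le_neg (hc u hu))
  linarith

/-- A general practical fixed-time convergence lemma. -/
lemma fixed_time_aux (t0 : ℝ) (V : ℝ → ℝ) (hV : Differentiable ℝ V)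
    (hVnn : ∀ s, t0 ≤ s → 0 ≤ V s)
    (a b p q L : ℝ) (ha : 0 < a) (hb : 0 < b)
    (hp0 : 0 < p) (hp1 : p < 1) (hq : 1 < q) (hL : 0 < L)
    (hd : ∀ s, t0 ≤ s → L < V s →
      deriv V s ≤ -(a * V s ^ p) ∧ deriv V s ≤ -(b * V s ^ q)) :
    ∀ t, t0 + 1 / (b * (q - 1)) + 1 / (a * (1 - p)) ≤ t → V t ≤ L := by
  intro t ht
  have hq1 : (0 : ℝ) < q - 1 := by linarith
  have hp1' : (0 : ℝ) < 1 - p := by linarith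
  have hT1pos : 0 < 1 / (b * (q - 1)) := div_pos one_pos (mul_pos hb hq1)
  have hT2pos : 0 < 1 / (a * (1 - p)) := div_pos one_pos (mul_pos ha hp1')
  set T1 : ℝ := t0 + 1 / (b * (q - 1)) with hT1
  set T2 : ℝ := T1 + 1 / (a * (1 - p)) with hT2
  have ht0T1 : t0 ≤ T1 := by rw [hT1]; linarith
  have hT1T2 : T1 ≤ T2 := by rw [hT2]; linarith
  have hT2t : T2 ≤ t := ht
  -- Invariance: once `V ≤ L`, it stays `≤ L`.
  have invariance : ∀ s u, t0 ≤ s → s ≤ u → V s ≤ L → V u ≤ L := by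
    intro s u hs hsu hVs
    by_contra hcon
    push_neg at hcon
    set S : Set ℝ := Set.Icc s u ∩ V ⁻¹' (Set.Iic L) with hS
    have hScomp : IsCompact S :=
      isCompact_Icc.inter_right (isClosed_Iic.preimage hV.continuous)
    have hSne : S.Nonempty := ⟨s, Set.mem_inter (Set.left_mem_Icc.2 hsu) hVs⟩
    have hmem : sSup S ∈ S := hScomp.sSup_mem hSne
    set s' : ℝ := sSup S with hs'
    obtain ⟨⟨hss', hs'u⟩, hVs'⟩ := hmem
    have hVs'' : V s' ≤ L := hVs'
    have hs'lt : s' < u := by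
      rcases lt_or_eq_of_le hs'u with h | h
      · exact h
      · exfalso; rw [h] at hVs''; exact absurd hVs'' (not_le.2 hcon)
    have hVgt : ∀ r, s' < r → r ≤ u → L < V r := by
      intro r hr1 hr2
      by_contra hcr
      push_neg at hcr
      have hrS : r ∈ S := ⟨⟨le_trans hss' hr1.le, hr2⟩, hcr⟩
      have : r ≤ s' := le_csSup hScomp.bddAbove hrS
      linarith
    have hanti : StrictAntiOn V (Set.Icc s' u) := by
      apply strictAntiOn_of_deriv_neg (convex_Icc s' u) hV.continuous.continuousOn
      intro r hr
      rw [interior_Icc] at hr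
      have h1 : t0 ≤ r := le_trans hs (le_trans hss' hr.1.le)
      have h2 : L < V r := hVgt r hr.1 hr.2.le
      have h3 := (hd r h1 h2).1
      have hpow : 0 < V r ^ p := Real.rpow_pos_of_pos (lt_trans hL h2) p
      nlinarith
    have := hanti (Set.left_mem_Icc.2 hs'lt.le) (Set.right_mem_Icc.2 hs'lt.le) hs'lt
    linarith
  -- Phase 1: V drops below `max L 1` by time `T1`.
  have phase1 : ∃ s ∈ Set.Icc t0 T1, V s ≤ max L 1 := by
    by_contra hcon
    push_neg at hcon
    have hVbig : ∀ r ∈ Set.Icc t0 T1, 1 < V r := fun r hr =>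
      lt_of_le_of_lt (le_max_right L 1) (hcon r hr)
    have hVpos : ∀ r ∈ Set.Icc t0 T1, 0 < V r := fun r hr =>
      lt_trans one_pos (hVbig r hr)
    have hder : ∀ r ∈ Set.Icc t0 T1,
        HasDerivAt (fun u => V u ^ (1 - q)) (deriv V r * (1 - q) * V r ^ (1 - q - 1)) r := by
      intro r hr
      exact (hV r).hasDerivAt.rpow_const (Or.inl (ne_of_gt (hVpos r hr)))
    have hderlb : ∀ r ∈ Set.Icc t0 T1,
        b * (q - 1) ≤ deriv V r * (1 - q) * V r ^ (1 - q - 1) := by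
      intro r hr
      have h1 : t0 ≤ r := hr.1
      have h2 : L < V r := lt_of_le_of_lt (le_max_left L 1) (hcon r hr)
      have hdle := (hd r h1 h2).2
      have hpos := hVpos r hr
      have hkey : V r ^ q * V r ^ (1 - q - 1) = 1 := by
        rw [← Real.rpow_add hpos]
        norm_num
      have hpow1 : 0 < V r ^ (1 - q - 1) := Real.rpow_pos_of_pos hpos _
      have hpow2 : 0 < V r ^ q := Real.rpow_pos_of_pos hpos _
      have h3 : b * (q - 1) * V r ^ q ≤ deriv V r * (1 - q) := by
        nlinarith [mul_le_mul_of_nonneg_right hdle hq1.le]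
      calc b * (q - 1) = b * (q - 1) * (V r ^ q * V r ^ (1 - q - 1)) := by
            rw [hkey]; ring
        _ = b * (q - 1) * V r ^ q * V r ^ (1 - q - 1) := by ring
        _ ≤ deriv V r * (1 - q) * V r ^ (1 - q - 1) :=
            mul_le_mul_of_nonneg_right h3 hpow1.le
    have hbound := deriv_lower_bound_aux (f := fun u => V u ^ (1 - q))
      (f' := fun r => deriv V r * (1 - q) * V r ^ (1 - q - 1)) (c := b * (q - 1))
      ht0T1 hder hderlb
    have hTdiff : b * (q - 1) * (T1 - t0) = 1 := by
      have h : T1 - t0 = 1 / (b * (q - 1)) := by rw [hT1]; ring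
      rw [h, mul_one_div, div_self (ne_of_gt (mul_pos hb hq1))]
    rw [hTdiff] at hbound
    have hlt1 : V T1 ^ (1 - q) < 1 :=
      Real.rpow_lt_one_of_one_lt_of_neg (hVbig T1 (Set.right_mem_Icc.2 ht0T1)) (by linarith)
    have hgt0 : 0 < V t0 ^ (1 - q) :=
      Real.rpow_pos_of_pos (hVpos t0 (Set.left_mem_Icc.2 ht0T1)) _
    linarith
  obtain ⟨s1, hs1mem, hs1⟩ := phase1
  rcases le_or_gt (1 : ℝ) L with hL1 | hL1
  · -- `max L 1 = L`, done via invariance.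
    have : V s1 ≤ L := by rwa [max_eq_left hL1] at hs1
    exact invariance s1 t hs1mem.1 (le_trans hs1mem.2 (le_trans hT1T2 hT2t)) this
  · -- `L < 1`; phase 2 brings `V` from `≤ 1` down to `≤ L` by time `T2`.
    have hs1le1 : V s1 ≤ 1 := by rwa [max_eq_right hL1.le] at hs1
    have hs1T2 : s1 ≤ T2 := le_trans hs1mem.2 hT1T2
    have phase2 : ∃ s ∈ Set.Icc s1 T2, V s ≤ L := by
      by_contra hcon
      push_neg at hcon
      have hVgt : ∀ r ∈ Set.Icc s1 T2, L < V r := hcon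
      have hVpos : ∀ r ∈ Set.Icc s1 T2, 0 < V r := fun r hr => lt_trans hL (hVgt r hr)
      have hder : ∀ r ∈ Set.Icc s1 T2,
          HasDerivAt (fun u => V u ^ (1 - p)) (deriv V r * (1 - p) * V r ^ (1 - p - 1)) r := by
        intro r hr
        exact (hV r).hasDerivAt.rpow_const (Or.inl (ne_of_gt (hVpos r hr)))
      have hderub : ∀ r ∈ Set.Icc s1 T2,
          deriv V r * (1 - p) * V r ^ (1 - p - 1) ≤ -(a * (1 - p)) := by
        intro r hr
        have h1 : t0 ≤ r := le_trans hs1mem.1 hr.1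
        have h2 : L < V r := hVgt r hr
        have hdle := (hd r h1 h2).1
        have hpos := hVpos r hr
        have hkey : V r ^ p * V r ^ (1 - p - 1) = 1 := by
          rw [← Real.rpow_add hpos]
          norm_num
        have hpow1 : 0 < V r ^ (1 - p - 1) := Real.rpow_pos_of_pos hpos _
        have hpow2 : 0 < V r ^ p := Real.rpow_pos_of_pos hpos _
        have h3 : deriv V r * (1 - p) ≤ -(a * (1 - p)) * V r ^ p := by
          nlinarith [mul_le_mul_of_nonneg_right hdle hp1'.le]
        calc deriv V r * (1 - p) * V r ^ (1 - p - 1)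
            ≤ -(a * (1 - p)) * V r ^ p * V r ^ (1 - p - 1) :=
              mul_le_mul_of_nonneg_right h3 hpow1.le
          _ = -(a * (1 - p)) * (V r ^ p * V r ^ (1 - p - 1)) := by ring
          _ = -(a * (1 - p)) := by rw [hkey]; ring
      have hbound := deriv_upper_bound_aux (f := fun u => V u ^ (1 - p))
        (f' := fun r => deriv V r * (1 - p) * V r ^ (1 - p - 1)) (c := -(a * (1 - p)))
        hs1T2 hder hderub
      have hs1pow : V s1 ^ (1 - p) ≤ 1 :=
        Real.rpow_le_one (hVnn s1 hs1mem.1) hs1le1 (by linarith)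
      have hT2pow : 0 < V T2 ^ (1 - p) :=
        Real.rpow_pos_of_pos (hVpos T2 (Set.right_mem_Icc.2 hs1T2)) _
      have htime : (1 : ℝ) ≤ a * (1 - p) * (T2 - s1) := by
        have h1 : a * (1 - p) * (T2 - T1) = 1 := by
          have h : T2 - T1 = 1 / (a * (1 - p)) := by rw [hT2]; ring
          rw [h, mul_one_div, div_self (ne_of_gt (mul_pos ha hp1'))]
        have h2 : a * (1 - p) * (T2 - T1) ≤ a * (1 - p) * (T2 - s1) :=
          mul_le_mul_of_nonneg_left (by linarith [hs1mem.2]) (mul_pos ha hp1').le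
        linarith
      nlinarith
    obtain ⟨s2, hs2mem, hs2⟩ := phase2
    exact invariance s2 t (le_trans hs1mem.1 hs2mem.1) (le_trans hs2mem.2 hT2t) hs2

set_option maxHeartbeats 1000000 in
/-- Practical fixed-time convergence estimate for the composite Lyapunov function of
the saturated adaptive fuzzy backstepping controller (equations (59)-(60)). Powers
are real powers (`rpow`). -/
theorem adaptive_fuzzy_practical_fixed_time
    (t0 : ℝ) (V : ℝ → ℝ) (hV : Differentiable ℝ V)
    (hVnonneg : ∀ t, t0 ≤ t → 0 ≤ V t)
    (χ1 χ2 γ ι σ : ℝ)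
    (hχ1 : 0 < χ1) (hχ2 : 0 < χ2) (hγ0 : 0 < γ) (hγ1 : γ < 1) (hι : 1 < ι)
    (hσ : 0 < σ)
    (hineq : ∀ t, t0 ≤ t →
      deriv V t ≤ -(2 : ℝ) ^ ((γ + 1) / 2) * χ1 * (V t) ^ ((γ + 1) / 2)
        - (2 : ℝ) ^ ((ι + 1) / 2) * χ2 * (V t) ^ ((ι + 1) / 2) + σ) :
    ∀ κ : ℝ, 0 < κ → κ < 1 →
      ∀ t, t0 + 2 / (χ1 * (2 : ℝ) ^ ((γ + 1) / 2) * κ * (1 - γ))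
          + 2 / (χ2 * (2 : ℝ) ^ ((ι + 1) / 2) * κ * (ι - 1)) ≤ t →
        V t ≤ min ((σ / ((1 - κ) * (2 : ℝ) ^ ((γ + 1) / 2) * χ1)) ^ (2 / (γ + 1)))
                  ((σ / ((1 - κ) * (2 : ℝ) ^ ((ι + 1) / 2) * χ2)) ^ (2 / (ι + 1))) := by
  intro κ hκ0 hκ1 t ht
  set p : ℝ := (γ + 1) / 2 with hp
  set q : ℝ := (ι + 1) / 2 with hq
  have hp0 : 0 < p := by rw [hp]; linarith
  have hp1 : p < 1 := by rw [hp]; linarith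
  have hq1 : 1 < q := by rw [hq]; linarith
  set A : ℝ := (2 : ℝ) ^ p * χ1 with hA
  set B : ℝ := (2 : ℝ) ^ q * χ2 with hB
  have h2p : (0 : ℝ) < (2 : ℝ) ^ p := Real.rpow_pos_of_pos two_pos p
  have h2q : (0 : ℝ) < (2 : ℝ) ^ q := Real.rpow_pos_of_pos two_pos q
  have hApos : 0 < A := by rw [hA]; positivity
  have hBpos : 0 < B := by rw [hB]; positivity
  have h1κ : 0 < 1 - κ := by linarith
  set M1 : ℝ := (σ / ((1 - κ) * (2 : ℝ) ^ p * χ1)) ^ (2 / (γ + 1)) with hM1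
  set M2 : ℝ := (σ / ((1 - κ) * (2 : ℝ) ^ q * χ2)) ^ (2 / (ι + 1)) with hM2
  have hbase1 : 0 < σ / ((1 - κ) * (2 : ℝ) ^ p * χ1) := by positivity
  have hbase2 : 0 < σ / ((1 - κ) * (2 : ℝ) ^ q * χ2) := by positivity
  have hM1pos : 0 < M1 := Real.rpow_pos_of_pos hbase1 _
  have hM2pos : 0 < M2 := Real.rpow_pos_of_pos hbase2 _
  set L : ℝ := min M1 M2 with hLdef
  have hLpos : 0 < L := lt_min hM1pos hM2pos
  -- M1^p and M2^q compute back to the base value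
  have hγne : γ + 1 ≠ 0 := by linarith
  have hιne : ι + 1 ≠ 0 := by linarith
  have hM1p : M1 ^ p = σ / ((1 - κ) * (2 : ℝ) ^ p * χ1) := by
    rw [hM1, ← Real.rpow_mul hbase1.le]
    have h : 2 / (γ + 1) * p = 1 := by rw [hp]; field_simp
    rw [h, Real.rpow_one]
  have hM2q : M2 ^ q = σ / ((1 - κ) * (2 : ℝ) ^ q * χ2) := by
    rw [hM2, ← Real.rpow_mul hbase2.le]
    have h : 2 / (ι + 1) * q = 1 := by rw [hq]; field_simp
    rw [h, Real.rpow_one]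
  -- the key differential inequality away from the residual set
  have hd : ∀ s, t0 ≤ s → L < V s →
      deriv V s ≤ -(κ * A * V s ^ p) ∧ deriv V s ≤ -(κ * B * V s ^ q) := by
    intro s hs hLV
    have hVpos : 0 < V s := lt_trans hLpos hLV
    have hbound := hineq s hs
    rw [hB] at hbound
    have hpowp : 0 < V s ^ p := Real.rpow_pos_of_pos hVpos p
    have hpowq : 0 < V s ^ q := Real.rpow_pos_of_pos hVpos q
    have hXp : 0 < (2 : ℝ) ^ p * χ1 * V s ^ p := by positivity
    have hYq : 0 < (2 : ℝ) ^ q * χ2 * V s ^ q := by positivity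
    rw [hLdef] at hLV
    have hσlt : σ < (1 - κ) * (2 : ℝ) ^ p * χ1 * V s ^ p ∨
        σ < (1 - κ) * (2 : ℝ) ^ q * χ2 * V s ^ q := by
      rcases min_lt_iff.1 hLV with h1 | h1
      · left
        have h2 : M1 ^ p < V s ^ p := Real.rpow_lt_rpow hM1pos.le h1 hp0
        rw [hM1p] at h2
        have hden : 0 < (1 - κ) * (2 : ℝ) ^ p * χ1 := by positivity
        calc σ = (1 - κ) * (2 : ℝ) ^ p * χ1 * (σ / ((1 - κ) * (2 : ℝ) ^ p * χ1)) := by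
              field_simp
          _ < (1 - κ) * (2 : ℝ) ^ p * χ1 * V s ^ p := (mul_lt_mul_iff_right₀ hden).2 h2
      · right
        have h2 : M2 ^ q < V s ^ q := Real.rpow_lt_rpow hM2pos.le h1 (by linarith)
        rw [hM2q] at h2
        have hden : 0 < (1 - κ) * (2 : ℝ) ^ q * χ2 := by positivity
        calc σ = (1 - κ) * (2 : ℝ) ^ q * χ2 * (σ / ((1 - κ) * (2 : ℝ) ^ q * χ2)) := by
              field_simp
          _ < (1 - κ) * (2 : ℝ) ^ q * χ2 * V s ^ q := (mul_lt_mul_iff_right₀ hden).2 h2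
    constructor
    · rw [hA]
      rcases hσlt with h | h
      · linarith [mul_nonneg hκ0.le hYq.le]
      · linarith [mul_nonneg hκ0.le hYq.le, mul_nonneg h1κ.le hXp.le]
    · rw [hB]
      rcases hσlt with h | h
      · linarith [mul_nonneg hκ0.le hXp.le, mul_nonneg h1κ.le hYq.le]
      · linarith [mul_nonneg hκ0.le hXp.le]
  -- translate the settling-time expression
  have h1γ : (0 : ℝ) < 1 - γ := by linarith
  have h1ι : (0 : ℝ) < ι - 1 := by linarith
  have d1 : (0 : ℝ) < χ1 * (2 : ℝ) ^ p * κ * (1 - γ) :=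
    mul_pos (mul_pos (mul_pos hχ1 h2p) hκ0) h1γ
  have d2 : (0 : ℝ) < κ * A * (1 - p) := mul_pos (mul_pos hκ0 hApos) (by linarith)
  have d3 : (0 : ℝ) < χ2 * (2 : ℝ) ^ q * κ * (ι - 1) :=
    mul_pos (mul_pos (mul_pos hχ2 h2q) hκ0) h1ι
  have d4 : (0 : ℝ) < κ * B * (q - 1) := mul_pos (mul_pos hκ0 hBpos) (by linarith)
  have e1 : 2 / (χ1 * (2 : ℝ) ^ p * κ * (1 - γ)) = 1 / (κ * A * (1 - p)) := by
    rw [div_eq_div_iff (ne_of_gt d1) (ne_of_gt d2), hA, hp]; ring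
  have e2 : 2 / (χ2 * (2 : ℝ) ^ q * κ * (ι - 1)) = 1 / (κ * B * (q - 1)) := by
    rw [div_eq_div_iff (ne_of_gt d3) (ne_of_gt d4), hB, hq]; ring
  have htime : t0 + 1 / (κ * B * (q - 1)) + 1 / (κ * A * (1 - p)) ≤ t := by
    rw [← e1, ← e2]; linarith
  exact fixed_time_aux t0 V hV hVnonneg (κ * A) (κ * B) p q L
    (mul_pos hκ0 hApos) (mul_pos hκ0 hBpos) hp0 hp1 hq1 hLpos hd t htime
end

section
/- Let $t_0 \in \mathbb{R}$, let $k_1, k_2, k_3 > 0$, $0 < \gamma < 1$, $\iota > 1$, and let $s : \mathbb{R} \to \mathbb{R}$ be differentiable and satisfy, for all $t \ge t_0$, $s'(t) = -\big(k_1 s(t) + k_2\,\mathrm{sign}(s(t))|s(t)|^{\gamma} + k_3\,\mathrm{sign}(s(t))|s(t)|^{\iota}\big)$. Then $s(t) = 0$ for every $t \ge t_0 + \frac{2}{2^{\frac{\gamma+1}{2}} k_2 (1-\gamma)} + \frac{2}{2^{\frac{\iota+1}{2}} k_3 (\iota-1)}$. -/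
set_option maxHeartbeats 1000000 in
/-- Fixed-time convergence of one scalar channel of the first backstepping step
(equations (B4)-(B6)): the virtual control `α = -(k1 s + k2 s^γ + k3 s^ι)`, where
`s^a := sign(s) * |s|^a`, drives the sliding variable to zero within a time
independent of the initial condition. Here `Real.sign x` is `1` for `x > 0`, `-1`
for `x < 0`, and `0` for `x = 0`; powers are real powers (`rpow`). -/
theorem virtual_control_fixed_time
    (t0 : ℝ) (k1 k2 k3 γ ι : ℝ)
    (hk1 : 0 < k1) (hk2 : 0 < k2) (hk3 : 0 < k3)
    (hγ0 : 0 < γ) (hγ1 : γ < 1) (hι : 1 < ι)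
    (s : ℝ → ℝ) (hs : Differentiable ℝ s)
    (hode : ∀ t, t0 ≤ t →
      deriv s t = -(k1 * s t + k2 * Real.sign (s t) * |s t| ^ γ
        + k3 * Real.sign (s t) * |s t| ^ ι)) :
    ∀ t, t0 + 2 / ((2 : ℝ) ^ ((γ + 1) / 2) * k2 * (1 - γ))
        + 2 / ((2 : ℝ) ^ ((ι + 1) / 2) * k3 * (ι - 1)) ≤ t → s t = 0 := by
  have habs : ∀ (c : ℝ), 0 < c → ∀ x : ℝ, x * (Real.sign x * |x| ^ c) = |x| ^ (c + 1) := by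
    intro c hc x
    rcases lt_trichotomy x 0 with h | h | h
    · rw [Real.sign_of_neg h, abs_of_neg h]
      rw [show (-x) ^ (c + 1) = (-x) ^ (1 + c) from by ring_nf,
        Real.rpow_add (by linarith) 1 c, Real.rpow_one]
      ring
    · simp [h, Real.zero_rpow (by positivity : c + 1 ≠ 0)]
    · rw [Real.sign_of_pos h, abs_of_pos h]
      rw [show x ^ (c + 1) = x ^ (1 + c) from by ring_nf,
        Real.rpow_add h 1 c, Real.rpow_one]
      ring
  set p : ℝ := (γ + 1) / 2 with hp
  set q : ℝ := (ι + 1) / 2 with hq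
  have hp0 : 0 < p := by rw [hp]; linarith
  have hp1 : p < 1 := by rw [hp]; linarith
  have hq1 : 1 < q := by rw [hq]; linarith
  have h2p : (0:ℝ) < 2 ^ p := Real.rpow_pos_of_pos two_pos p
  have h2q : (0:ℝ) < 2 ^ q := Real.rpow_pos_of_pos two_pos q
  set a : ℝ := 2 ^ p * k2 with ha
  set b : ℝ := 2 ^ q * k3 with hb
  have ha0 : 0 < a := mul_pos h2p hk2
  have hb0 : 0 < b := mul_pos h2q hk3
  set T1 : ℝ := 1 / (a * (1 - p)) with hT1
  set T2 : ℝ := 1 / (b * (q - 1)) with hT2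
  have hT1pos : 0 < T1 := by
    have h1p : 0 < 1 - p := by linarith
    rw [hT1]; positivity
  have hT2pos : 0 < T2 := by
    have : 0 < q - 1 := by linarith
    rw [hT2]; positivity
  set V : ℝ → ℝ := fun t => s t ^ 2 / 2 with hVdef
  have hV0 : ∀ t, 0 ≤ V t := by intro t; rw [hVdef]; positivity
  have hVd : ∀ t, HasDerivAt V (s t * deriv s t) t := by
    intro t
    have h := (((hs t).hasDerivAt).pow 2).div_const 2
    convert h using 1
    push_cast
    · rfl
    · rfl
    · rfl
    · norm_num
      ring
  have hVdiff : Differentiable ℝ V := fun t => (hVd t).differentiableAt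
  have hVpow : ∀ t (c : ℝ), (2:ℝ) ^ c * V t ^ c = |s t| ^ (2 * c) := by
    intro t c
    have h2V : (2:ℝ) * V t = |s t| ^ (2:ℝ) := by
      rw [show ((2:ℝ):ℝ) = ((2:ℕ):ℝ) from by norm_num, Real.rpow_natCast, sq_abs, hVdef]
      ring
    rw [← Real.mul_rpow (by norm_num) (hV0 t), h2V, ← Real.rpow_mul (abs_nonneg _)]
  have h2p' : 2 * p = γ + 1 := by rw [hp]; ring
  have h2q' : 2 * q = ι + 1 := by rw [hq]; ring
  have key : ∀ t, t0 ≤ t → deriv V t = -(k1 * s t ^ 2 + a * V t ^ p + b * V t ^ q) := by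
    intro t ht
    have hd : deriv V t = s t * deriv s t := (hVd t).deriv
    rw [hd, hode t ht]
    have hap : a * V t ^ p = k2 * |s t| ^ (γ + 1) := by
      rw [ha, show 2 ^ p * k2 * V t ^ p = k2 * (2 ^ p * V t ^ p) from by ring,
        hVpow t p, h2p']
    have hbq : b * V t ^ q = k3 * |s t| ^ (ι + 1) := by
      rw [hb, show 2 ^ q * k3 * V t ^ q = k3 * (2 ^ q * V t ^ q) from by ring,
        hVpow t q, h2q']
    rw [hap, hbq, ← habs γ hγ0 (s t), ← habs ι (by linarith) (s t)]
    ring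
  have hterm : ∀ t, 0 ≤ k1 * s t ^ 2 ∧ 0 ≤ a * V t ^ p ∧ 0 ≤ b * V t ^ q := by
    intro t
    refine ⟨by positivity, ?_, ?_⟩
    · exact mul_nonneg ha0.le (Real.rpow_nonneg (hV0 t) p)
    · exact mul_nonneg hb0.le (Real.rpow_nonneg (hV0 t) q)
  have hanti : AntitoneOn V (Set.Ici t0) := by
    refine antitoneOn_of_deriv_nonpos (convex_Ici t0) hVdiff.continuous.continuousOn
      hVdiff.differentiableOn ?_
    intro x hx
    rw [interior_Ici] at hx
    rw [key x (le_of_lt hx)]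
    obtain ⟨h1, h2, h3⟩ := hterm x
    linarith
  set tA : ℝ := t0 + T2 with htAdef
  set tB : ℝ := tA + T1 with htBdef
  have htA : t0 ≤ tA := by rw [htAdef]; linarith
  have htB : tA ≤ tB := by rw [htBdef]; linarith
  have ht0B : t0 ≤ tB := le_trans htA htB
  have hVzero : V tB = 0 := by
    by_contra h
    have hpos : 0 < V tB := (hV0 tB).lt_of_ne (Ne.symm h)
    have hVpos : ∀ x ∈ Set.Icc t0 tB, 0 < V x := by
      intro x hx
      exact lt_of_lt_of_le hpos (hanti (Set.mem_Ici.2 hx.1) (Set.mem_Ici.2 ht0B) hx.2)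
    -- Phase 1 : on [t0, tA], U = V ^ (1-q) grows at rate ≥ b(q-1)
    have hVtA : V tA < 1 := by
      set U : ℝ → ℝ := fun t => V t ^ (1 - q) with hUdef
      have hsub : Set.Icc t0 tA ⊆ Set.Icc t0 tB := Set.Icc_subset_Icc_right htB
      have hUderiv : ∀ x ∈ interior (Set.Icc t0 tA),
          HasDerivAt U ((1 - q) * V x ^ (1 - q - 1) * deriv V x) x := by
        intro x hx
        rw [interior_Icc] at hx
        have hVx : V x ≠ 0 :=
          ne_of_gt (hVpos x (hsub ⟨hx.1.le, hx.2.le⟩))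
        have h := ((hVdiff x).hasDerivAt).rpow_const (p := 1 - q) (Or.inl hVx)
        convert h using 1
        ring
      have hUcont : ContinuousOn U (Set.Icc t0 tA) := by
        refine (hVdiff.continuous.continuousOn).rpow_const ?_
        intro x hx
        exact Or.inl (ne_of_gt (hVpos x (hsub hx)))
      have hUdiff : DifferentiableOn ℝ U (interior (Set.Icc t0 tA)) := by
        intro x hx
        exact ((hUderiv x hx).differentiableAt).differentiableWithinAt
      have hbound : ∀ x ∈ interior (Set.Icc t0 tA), b * (q - 1) ≤ deriv U x := by
        intro x hx
        rw [(hUderiv x hx).deriv]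
        have hxmem : x ∈ Set.Icc t0 tB := by
          rw [interior_Icc] at hx; exact hsub ⟨hx.1.le, hx.2.le⟩
        have hVx : 0 < V x := hVpos x hxmem
        have hxt0 : t0 ≤ x := by
          rw [interior_Icc] at hx; exact hx.1.le
        have hle : deriv V x ≤ -(b * V x ^ q) := by
          rw [key x hxt0]
          obtain ⟨h1, h2, _⟩ := hterm x
          linarith
        have hc : (1 - q) * V x ^ (1 - q - 1) ≤ 0 := by
          have := Real.rpow_nonneg (hV0 x) (1 - q - 1)
          nlinarith
        have hmul := mul_le_mul_of_nonpos_left hle hc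
        have hVq1 : V x ^ (1 - q - 1) * V x ^ q = V x ^ (1 - q - 1 + q) :=
          (Real.rpow_add hVx _ _).symm
        have heq : (1 - q) * V x ^ (1 - q - 1) * -(b * V x ^ q) = b * (q - 1) := by
          rw [show (1 - q) * V x ^ (1 - q - 1) * -(b * V x ^ q)
              = b * (q - 1) * (V x ^ (1 - q - 1) * V x ^ q) from by ring, hVq1]
          norm_num
        linarith [hmul, heq.symm.le, heq.le]
      have hgrow := (convex_Icc t0 tA).mul_sub_le_image_sub_of_le_deriv hUcont hUdiff hbound
        t0 (Set.left_mem_Icc.2 htA) tA (Set.right_mem_Icc.2 htA) htA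
      have hbq1 : b * (q - 1) * (tA - t0) = 1 := by
        have hne : b * (q - 1) ≠ 0 := by
          have : 0 < q - 1 := by linarith
          positivity
        rw [show tA - t0 = T2 from by rw [htAdef]; ring, hT2, mul_one_div, div_self hne]
      have hU0 : 0 < U t0 :=
        Real.rpow_pos_of_pos (hVpos t0 ⟨le_refl _, ht0B⟩) _
      have hUA : 1 < U tA := by
        rw [hbq1] at hgrow
        linarith
      by_contra hge
      push_neg at hge
      have : U tA ≤ 1 := Real.rpow_le_one_of_one_le_of_nonpos hge (by linarith)
      linarith
    -- Phase 2 : on [tA, tB], W = V ^ (1-p) decreases at rate ≤ -a(1-p)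
    set W : ℝ → ℝ := fun t => V t ^ (1 - p) with hWdef
    have hsub2 : Set.Icc tA tB ⊆ Set.Icc t0 tB := Set.Icc_subset_Icc_left htA
    have hWderiv : ∀ x ∈ interior (Set.Icc tA tB),
        HasDerivAt W ((1 - p) * V x ^ (1 - p - 1) * deriv V x) x := by
      intro x hx
      rw [interior_Icc] at hx
      have hVx : V x ≠ 0 := ne_of_gt (hVpos x (hsub2 ⟨hx.1.le, hx.2.le⟩))
      have h := ((hVdiff x).hasDerivAt).rpow_const (p := 1 - p) (Or.inl hVx)
      convert h using 1
      ring
    have hWcont : ContinuousOn W (Set.Icc tA tB) := by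
      refine (hVdiff.continuous.continuousOn).rpow_const ?_
      intro x hx
      exact Or.inl (ne_of_gt (hVpos x (hsub2 hx)))
    have hWdiff : DifferentiableOn ℝ W (interior (Set.Icc tA tB)) := by
      intro x hx
      exact ((hWderiv x hx).differentiableAt).differentiableWithinAt
    have hbound2 : ∀ x ∈ interior (Set.Icc tA tB), deriv W x ≤ -(a * (1 - p)) := by
      intro x hx
      rw [(hWderiv x hx).deriv]
      have hxmem : x ∈ Set.Icc t0 tB := by
        rw [interior_Icc] at hx; exact hsub2 ⟨hx.1.le, hx.2.le⟩
      have hVx : 0 < V x := hVpos x hxmem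
      have hxt0 : t0 ≤ x := hxmem.1
      have hle : deriv V x ≤ -(a * V x ^ p) := by
        rw [key x hxt0]
        obtain ⟨h1, _, h3⟩ := hterm x
        linarith
      have hc : 0 ≤ (1 - p) * V x ^ (1 - p - 1) :=
        mul_nonneg (by linarith) (Real.rpow_nonneg (hV0 x) _)
      have hmul := mul_le_mul_of_nonneg_left hle hc
      have hVp1 : V x ^ (1 - p - 1) * V x ^ p = V x ^ (1 - p - 1 + p) :=
        (Real.rpow_add hVx _ _).symm
      have heq : (1 - p) * V x ^ (1 - p - 1) * -(a * V x ^ p) = -(a * (1 - p)) := by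
        rw [show (1 - p) * V x ^ (1 - p - 1) * -(a * V x ^ p)
            = -(a * (1 - p)) * (V x ^ (1 - p - 1) * V x ^ p) from by ring, hVp1]
        norm_num
      calc (1 - p) * V x ^ (1 - p - 1) * deriv V x
          ≤ (1 - p) * V x ^ (1 - p - 1) * -(a * V x ^ p) := hmul
        _ = -(a * (1 - p)) := heq
    have hdecay := (convex_Icc tA tB).image_sub_le_mul_sub_of_deriv_le hWcont hWdiff hbound2
      tA (Set.left_mem_Icc.2 htB) tB (Set.right_mem_Icc.2 htB) htB
    have hap1 : -(a * (1 - p)) * (tB - tA) = -1 := by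
      have hne : a * (1 - p) ≠ 0 := by
        have : 0 < 1 - p := by linarith
        positivity
      rw [show tB - tA = T1 from by rw [htBdef]; ring, hT1, mul_one_div, neg_div, div_self hne]
    have hWA : W tA < 1 := Real.rpow_lt_one (hV0 tA) hVtA (by linarith)
    have hWB : 0 ≤ W tB := Real.rpow_nonneg (hV0 tB) _
    rw [show tA + T1 - tA = tB - tA from by rw [htBdef]] at hdecay
    rw [hap1] at hdecay
    linarith
  -- conclude
  intro t ht
  have hT1eq : 2 / ((2:ℝ) ^ p * k2 * (1 - γ)) = T1 := by
    have h1γ : 0 < 1 - γ := by linarith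
    have h1p : 0 < 1 - p := by linarith
    rw [hT1]
    rw [div_eq_div_iff (by positivity) (by positivity)]
    rw [ha]
    rw [show (1 : ℝ) - p = (1 - γ) / 2 from by rw [hp]; ring]
    ring
  have hT2eq : 2 / ((2:ℝ) ^ q * k3 * (ι - 1)) = T2 := by
    have hι1 : 0 < ι - 1 := by linarith
    have hq1' : 0 < q - 1 := by linarith
    rw [hT2]
    rw [div_eq_div_iff (by positivity) (by positivity)]
    rw [hb]
    rw [show q - 1 = (ι - 1) / 2 from by rw [hq]; ring]
    ring
  rw [hT1eq, hT2eq] at ht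
  have htB_le : tB ≤ t := by rw [htBdef, htAdef]; linarith
  have h1 : V t ≤ V tB := hanti (Set.mem_Ici.2 ht0B) (Set.mem_Ici.2 (le_trans ht0B htB_le))
    htB_le
  have h2 : V t = 0 := le_antisymm (by rw [← hVzero]; exact h1) (hV0 t)
  have : s t ^ 2 = 0 := by
    have := h2
    rw [hVdef] at this
    linarith [sq_nonneg (s t), this]
  exact pow_eq_zero_iff (by norm_num) |>.1 this
end

section
/- Let $t_0 \in \mathbb{R}$, let $\beta > \tilde{\lambda} \ge 0$, $k_8 \ge 0$, $k_9, k_{10} > 0$, $0 < \gamma < 1$, $\iota > 1$, and let $s : \mathbb{R} \to \mathbb{R}$ be differentiable and satisfy, for all $t \ge t_0$, $s(t)\,s'(t) \le -(\beta - \tilde{\lambda})|s(t)| - k_8 s(t)^2 - k_9 |s(t)|^{\gamma+1} - k_{10} |s(t)|^{\iota+1}$. Then $s(t) = 0$ for every $t \ge t_0 + \frac{2}{2^{\frac{\gamma+1}{2}} k_9 (1-\gamma)} + \frac{2}{2^{\frac{\iota+1}{2}} k_{10} (\iota-1)}$. -/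
open Set

private lemma anti_of_hasDeriv {f : ℝ → ℝ} {a b : ℝ}
    (hc : ContinuousOn f (Icc a b))
    (hd : ∀ x ∈ Ioo a b, ∃ f', HasDerivAt f f' x ∧ f' ≤ 0) :
    ∀ x ∈ Icc a b, ∀ y ∈ Icc a b, x ≤ y → f y ≤ f x := by
  have h : AntitoneOn f (Icc a b) := by
    apply antitoneOn_of_deriv_nonpos (convex_Icc a b) hc
    · rw [interior_Icc]
      intro x hx
      obtain ⟨f', hf', _⟩ := hd x hx
      exact hf'.differentiableAt.differentiableWithinAt
    · rw [interior_Icc]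
      intro x hx
      obtain ⟨f', hf', hle⟩ := hd x hx
      rw [hf'.deriv]; exact hle
  exact fun x hx y hy hxy => h hx hy hxy

set_option maxHeartbeats 1000000 in
/-- Fixed-time reaching property of the second backstepping sliding mode step under
a matched bounded disturbance (equations (B11)-(B12), (B14)): the closed-loop sliding
variable satisfying the Lyapunov-type product inequality converges to zero within a
time independent of the initial condition. Powers are real powers (`rpow`). -/
theorem sliding_mode_fixed_time_reaching
    (t0 : ℝ) (β lam k8 k9 k10 γ ι : ℝ)
    (hlam : 0 ≤ lam) (hβ : lam < β) (hk8 : 0 ≤ k8) (hk9 : 0 < k9) (hk10 : 0 < k10)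
    (hγ0 : 0 < γ) (hγ1 : γ < 1) (hι : 1 < ι)
    (s : ℝ → ℝ) (hs : Differentiable ℝ s)
    (hineq : ∀ t, t0 ≤ t →
      s t * deriv s t ≤ -(β - lam) * |s t| - k8 * (s t) ^ 2
        - k9 * |s t| ^ (γ + 1) - k10 * |s t| ^ (ι + 1)) :
    ∀ t, t0 + 2 / ((2 : ℝ) ^ ((γ + 1) / 2) * k9 * (1 - γ))
        + 2 / ((2 : ℝ) ^ ((ι + 1) / 2) * k10 * (ι - 1)) ≤ t → s t = 0 := by
  set T1 : ℝ := 2 / ((2 : ℝ) ^ ((γ + 1) / 2) * k9 * (1 - γ)) with hT1def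
  set T2 : ℝ := 2 / ((2 : ℝ) ^ ((ι + 1) / 2) * k10 * (ι - 1)) with hT2def
  have h2γ : (0:ℝ) < (2:ℝ) ^ ((γ + 1) / 2) := Real.rpow_pos_of_pos two_pos _
  have h2ι : (0:ℝ) < (2:ℝ) ^ ((ι + 1) / 2) := Real.rpow_pos_of_pos two_pos _
  have hT1 : 0 < T1 := by
    apply div_pos two_pos
    apply mul_pos (mul_pos h2γ hk9); linarith
  have hT2 : 0 < T2 := by
    apply div_pos two_pos
    apply mul_pos (mul_pos h2ι hk10); linarith
  -- the Lyapunov function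
  set V : ℝ → ℝ := fun t => s t ^ 2 / 2 with hVdef
  have hVnn : ∀ t, 0 ≤ V t := fun t => by positivity
  have hV : ∀ t, HasDerivAt V (s t * deriv s t) t := by
    intro t
    have h : HasDerivAt (fun x => s x ^ 2 / 2) (((2:ℕ):ℝ) * s t ^ (2 - 1) * deriv s t / 2) t :=
      ((hs t).hasDerivAt.pow 2).div_const 2
    convert h using 1
    push_cast
    ring
  have hVcont : Continuous V := ((hs.continuous.pow 2).div_const 2)
  -- rewriting |s|^e in terms of V
  have habs : ∀ (t : ℝ) (e : ℝ), |s t| ^ e = (2 * V t) ^ (e / 2) := by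
    intro t e
    have h1 : (2:ℝ) * V t = |s t| ^ (2:ℕ) := by
      simp only [hVdef, sq_abs]; ring
    rw [h1, ← Real.rpow_natCast (|s t|) 2, ← Real.rpow_mul (abs_nonneg _)]
    congr 1
    ring
  -- the two differential estimates
  have hEγ : ∀ t, t0 ≤ t → s t * deriv s t ≤ -(k9 * (2 * V t) ^ ((γ + 1) / 2)) := by
    intro t ht
    have h := hineq t ht
    have h1 : 0 ≤ (β - lam) * |s t| := mul_nonneg (by linarith) (abs_nonneg _)
    have h2 : 0 ≤ k8 * s t ^ 2 := by positivity
    have h3 : 0 ≤ k10 * |s t| ^ (ι + 1) :=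
      mul_nonneg hk10.le (Real.rpow_nonneg (abs_nonneg _) _)
    have h4 := habs t (γ + 1)
    rw [h4] at h
    linarith
  have hEι : ∀ t, t0 ≤ t → s t * deriv s t ≤ -(k10 * (2 * V t) ^ ((ι + 1) / 2)) := by
    intro t ht
    have h := hineq t ht
    have h1 : 0 ≤ (β - lam) * |s t| := mul_nonneg (by linarith) (abs_nonneg _)
    have h2 : 0 ≤ k8 * s t ^ 2 := by positivity
    have h3 : 0 ≤ k9 * |s t| ^ (γ + 1) :=
      mul_nonneg hk9.le (Real.rpow_nonneg (abs_nonneg _) _)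
    have h4 := habs t (ι + 1)
    rw [h4] at h
    linarith
  -- V is antitone on [t0, ∞)
  have hVanti : ∀ x ∈ Ici t0, ∀ y ∈ Ici t0, x ≤ y → V y ≤ V x := by
    have h : AntitoneOn V (Ici t0) := by
      apply antitoneOn_of_deriv_nonpos (convex_Ici t0) hVcont.continuousOn
      · intro x _
        exact ((hV x).differentiableAt).differentiableWithinAt
      · intro x hx
        rw [interior_Ici] at hx
        rw [(hV x).deriv]
        have := hEγ x (le_of_lt hx)
        have hnn : 0 ≤ k9 * (2 * V x) ^ ((γ + 1) / 2) :=
          mul_nonneg hk9.le (Real.rpow_nonneg (by have := hVnn x; linarith) _)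
        linarith
    exact fun x hx y hy hxy => h hx hy hxy
  -- Phase 1: V (t0 + T2) ≤ 1
  have hB : V (t0 + T2) ≤ 1 := by
    by_contra hcon
    push_neg at hcon
    set b : ℝ := t0 + T2 with hbdef
    set p : ℝ := (1 - ι) / 2 with hpdef
    set q : ℝ := (ι + 1) / 2 with hqdef
    set K : ℝ := (2:ℝ) ^ q * k10 with hKdef
    have hK : 0 < K := mul_pos (Real.rpow_pos_of_pos two_pos q) hk10
    set c : ℝ := K * (ι - 1) / 2 with hcdef
    have hnegp : 0 < -p := by rw [hpdef]; linarith
    have hb0 : t0 ≤ b := by rw [hbdef]; linarith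
    have hVgt : ∀ x ∈ Icc t0 b, 1 < V x := by
      intro x hx
      exact lt_of_lt_of_le hcon (hVanti x hx.1 b hb0 hx.2)
    set f : ℝ → ℝ := fun t => -(V t ^ p) + c * t with hfdef
    have hmain := anti_of_hasDeriv (f := f) (a := t0) (b := b) ?_ ?_ t0
      (left_mem_Icc.mpr hb0) b (right_mem_Icc.mpr hb0) hb0
    · -- extract the contradiction
      have hfa : f b ≤ f t0 := hmain
      have hVb : V b ^ p < 1 :=
        Real.rpow_lt_one_of_one_lt_of_neg (hVgt b (right_mem_Icc.mpr hb0)) (by linarith)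
      have hVa : 0 < V t0 ^ p :=
        Real.rpow_pos_of_pos (by have := hVgt t0 (left_mem_Icc.mpr hb0); linarith) _
      have hcT : c * (b - t0) = 1 := by
        have h1 : b - t0 = T2 := by rw [hbdef]; ring
        have hne : K * (ι - 1) ≠ 0 := ne_of_gt (mul_pos hK (by linarith))
        rw [h1, hT2def, hcdef]
        field_simp
        exact div_self (ne_of_gt (by linarith))
      simp only [hfdef] at hfa
      nlinarith
    · -- continuity
      apply ContinuousOn.add
      · apply ContinuousOn.neg
        apply ContinuousOn.rpow_const hVcont.continuousOn
        intro x hx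
        exact Or.inl (by have := hVgt x hx; linarith)
      · exact (continuous_const.mul continuous_id).continuousOn
    · -- derivative bound
      intro x hx
      have hx' : x ∈ Icc t0 b := ⟨hx.1.le, hx.2.le⟩
      have hv1 : 1 < V x := hVgt x hx'
      have hvpos : 0 < V x := by linarith
      set v : ℝ := V x with hvdef
      set d : ℝ := s x * deriv s x with hddef
      refine ⟨-(d * p * v ^ (p - 1)) + c * 1, ?_, ?_⟩
      · have h1 : HasDerivAt (fun t => V t ^ p) (d * p * v ^ (p - 1)) x :=
          (hV x).rpow_const (Or.inl (ne_of_gt hvpos))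
        exact h1.neg.add ((hasDerivAt_id x).const_mul c)
      · have hd9 : d ≤ -(K * v ^ q) := by
          have h := hEι x hx.1.le
          have h2 : (2 * v) ^ q = 2 ^ q * v ^ q :=
            Real.mul_rpow (by norm_num) hvpos.le
          have h3 : K * v ^ q = k10 * ((2:ℝ) ^ q * v ^ q) := by rw [hKdef]; ring
          rw [h3, ← h2]
          exact h
        have hvp : 0 < v ^ (p - 1) := Real.rpow_pos_of_pos hvpos _
        have hvv : v ^ q * v ^ (p - 1) = 1 := by
          rw [← Real.rpow_add hvpos, show q + (p - 1) = 0 by rw [hqdef, hpdef]; ring,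
            Real.rpow_zero]
        have h1 : d * ((-p) * v ^ (p - 1)) ≤ (-(K * v ^ q)) * ((-p) * v ^ (p - 1)) :=
          mul_le_mul_of_nonneg_right hd9 (by positivity)
        have h2 : (-(K * v ^ q)) * ((-p) * v ^ (p - 1)) = (p * K) * (v ^ q * v ^ (p - 1)) := by
          ring
        have h3 : (p * K) * (v ^ q * v ^ (p - 1)) = -c := by
          rw [hvv, hcdef, hpdef]; ring
        nlinarith
  -- Phase 2: V (t0 + T1 + T2) = 0
  have ha2 : t0 ≤ t0 + T2 := by linarith
  set tstar : ℝ := t0 + T1 + T2 with htstardef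
  have hstar0 : t0 ≤ tstar := by rw [htstardef]; linarith
  have ha2star : t0 + T2 ≤ tstar := by rw [htstardef]; linarith
  have hC : V tstar = 0 := by
    by_contra hcon
    have hpos : 0 < V tstar := lt_of_le_of_ne (hVnn tstar) (Ne.symm hcon)
    set a2 : ℝ := t0 + T2 with ha2def
    set p : ℝ := (1 - γ) / 2 with hpdef
    set q : ℝ := (γ + 1) / 2 with hqdef
    set K : ℝ := (2:ℝ) ^ q * k9 with hKdef
    have hK : 0 < K := mul_pos (Real.rpow_pos_of_pos two_pos q) hk9
    set c : ℝ := K * (1 - γ) / 2 with hcdef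
    have hp : 0 < p := by rw [hpdef]; linarith
    have hVgt : ∀ x ∈ Icc a2 tstar, 0 < V x := by
      intro x hx
      exact lt_of_lt_of_le hpos (hVanti x (le_trans ha2 hx.1) tstar hstar0 hx.2)
    set f : ℝ → ℝ := fun t => V t ^ p + c * t with hfdef
    have hmain := anti_of_hasDeriv (f := f) (a := a2) (b := tstar) ?_ ?_ a2
      (left_mem_Icc.mpr ha2star) tstar (right_mem_Icc.mpr ha2star) ha2star
    · have hfa : f tstar ≤ f a2 := hmain
      have hVb : 0 < V tstar ^ p := Real.rpow_pos_of_pos hpos _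
      have hVa : V a2 ^ p ≤ 1 := Real.rpow_le_one (hVnn a2) hB hp.le
      have hcT : c * (tstar - a2) = 1 := by
        have h1 : tstar - a2 = T1 := by rw [htstardef, ha2def]; ring
        have hne : K * (1 - γ) ≠ 0 := ne_of_gt (mul_pos hK (by linarith))
        rw [h1, hT1def, hcdef]
        field_simp
        exact div_self (ne_of_gt (by linarith))
      simp only [hfdef] at hfa
      nlinarith
    · apply ContinuousOn.add
      · apply ContinuousOn.rpow_const hVcont.continuousOn
        intro x hx
        exact Or.inl (ne_of_gt (hVgt x hx))
      · exact (continuous_const.mul continuous_id).continuousOn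
    · intro x hx
      have hx' : x ∈ Icc a2 tstar := ⟨hx.1.le, hx.2.le⟩
      have hvpos : 0 < V x := hVgt x hx'
      set v : ℝ := V x with hvdef
      set d : ℝ := s x * deriv s x with hddef
      refine ⟨d * p * v ^ (p - 1) + c * 1, ?_, ?_⟩
      · have h1 : HasDerivAt (fun t => V t ^ p) (d * p * v ^ (p - 1)) x :=
          (hV x).rpow_const (Or.inl (ne_of_gt hvpos))
        exact h1.add ((hasDerivAt_id x).const_mul c)
      · have hd9 : d ≤ -(K * v ^ q) := by
          have h := hEγ x (le_trans ha2 hx.1.le)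
          have h2 : (2 * v) ^ q = 2 ^ q * v ^ q :=
            Real.mul_rpow (by norm_num) hvpos.le
          have h3 : K * v ^ q = k9 * ((2:ℝ) ^ q * v ^ q) := by rw [hKdef]; ring
          rw [h3, ← h2]
          exact h
        have hvp : 0 < v ^ (p - 1) := Real.rpow_pos_of_pos hvpos _
        have hvv : v ^ q * v ^ (p - 1) = 1 := by
          rw [← Real.rpow_add hvpos, show q + (p - 1) = 0 by rw [hqdef, hpdef]; ring,
            Real.rpow_zero]
        have h1 : d * (p * v ^ (p - 1)) ≤ (-(K * v ^ q)) * (p * v ^ (p - 1)) :=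
          mul_le_mul_of_nonneg_right hd9 (by positivity)
        have h2 : (-(K * v ^ q)) * (p * v ^ (p - 1)) = (-(p * K)) * (v ^ q * v ^ (p - 1)) := by
          ring
        have h3 : (-(p * K)) * (v ^ q * v ^ (p - 1)) = -c := by
          rw [hvv, hcdef, hpdef]; ring
        nlinarith
  -- conclusion
  intro t ht
  have hVt : V t ≤ 0 := by
    have h := hVanti tstar hstar0 t (le_trans hstar0 ht) ht
    rw [hC] at h
    exact h
  have hVt0 : V t = 0 := le_antisymm hVt (hVnn t)
  have h4 : s t ^ 2 / 2 = 0 := hVt0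
  have h5 : s t ^ 2 = 0 := by linarith
  exact pow_eq_zero_iff (n := 2) (by norm_num) |>.mp h5
end

section
/- Let $\tau_{\max} > 0$ and define the saturation function $\mathrm{sat}(x) = x$ if $|x| < \tau_{\max}$ and $\mathrm{sat}(x) = \mathrm{sign}(x)\,\tau_{\max}$ if $|x| \ge \tau_{\max}$. Then for every $x \in \mathbb{R}$, $\left| \mathrm{sat}(x) - \tau_{\max} \tanh\!\left(\frac{x}{\tau_{\max}}\right) \right| \le \tau_{\max}\,(1 - \tanh 1)$. -/
private lemma tanh_hasDerivAt (t : ℝ) : HasDerivAt Real.tanh (1 / Real.cosh t ^ 2) t := by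
  have h := (Real.hasDerivAt_sinh t).div (Real.hasDerivAt_cosh t) (ne_of_gt (Real.cosh_pos t))
  have hfun : Real.tanh = fun y => Real.sinh y / Real.cosh y :=
    funext fun y => Real.tanh_eq_sinh_div_cosh y
  have hnum : Real.cosh t * Real.cosh t - Real.sinh t * Real.sinh t = 1 := by
    rw [← sq, ← sq, Real.cosh_sq_sub_sinh_sq]
  rw [hfun]
  rw [hnum] at h
  exact h

private lemma tanh_strictMono : StrictMono Real.tanh := by
  apply strictMono_of_deriv_pos
  intro t
  rw [(tanh_hasDerivAt t).deriv]
  positivity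

private lemma tanh_lt_one (t : ℝ) : Real.tanh t < 1 := by
  rw [Real.tanh_eq_sinh_div_cosh]
  exact (div_lt_one (Real.cosh_pos t)).2 (Real.sinh_lt_cosh t)

private lemma sub_tanh_monotone : Monotone (fun y : ℝ => y - Real.tanh y) := by
  apply monotone_of_deriv_nonneg
  · exact fun t => (differentiable_id.differentiableAt.sub (tanh_hasDerivAt t).differentiableAt)
  · intro t
    have h : HasDerivAt (fun y : ℝ => y - Real.tanh y) (1 - 1 / Real.cosh t ^ 2) t :=
      (hasDerivAt_id t).sub (tanh_hasDerivAt t)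
    rw [h.deriv]
    have h1 : (1:ℝ) ≤ Real.cosh t ^ 2 := by nlinarith [Real.one_le_cosh t]
    have : 1 / Real.cosh t ^ 2 ≤ 1 := by
      rw [div_le_one (by positivity)]; exact h1
    linarith

/-- unit case -/
private lemma key (u : ℝ) :
    |(if |u| < 1 then u else Real.sign u) - Real.tanh u| ≤ 1 - Real.tanh 1 := by
  have hnn : ∀ v : ℝ, 0 ≤ v → |(if |v| < 1 then v else Real.sign v) - Real.tanh v| ≤ 1 - Real.tanh 1 := by
    intro v hv
    by_cases h : |v| < 1
    · rw [if_pos h]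
      have hv1 : v ≤ 1 := le_of_lt (lt_of_abs_lt h)
      have h1 : v - Real.tanh v ≤ 1 - Real.tanh 1 := sub_tanh_monotone hv1
      have h2 : (0:ℝ) ≤ v - Real.tanh v := by
        have := sub_tanh_monotone hv
        simpa [Real.tanh_zero] using this
      rw [abs_of_nonneg h2]; exact h1
    · rw [if_neg h]
      have hv1 : 1 ≤ v := by
        rcases abs_cases v with ⟨h1, _⟩ | ⟨h1, _⟩ <;> [skip; linarith] ; linarith [not_lt.1 h]
      have hsgn : Real.sign v = 1 := Real.sign_of_pos (by linarith)
      rw [hsgn]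
      have h2 : Real.tanh 1 ≤ Real.tanh v := tanh_strictMono.monotone hv1
      have h3 : Real.tanh v < 1 := tanh_lt_one v
      rw [abs_of_nonneg (by linarith)]
      linarith
  rcases le_or_gt 0 u with hu | hu
  · exact hnn u hu
  · have := hnn (-u) (by linarith)
    rw [abs_neg, Real.sign_neg, Real.tanh_neg] at this
    rw [show (if |u| < 1 then u else Real.sign u) - Real.tanh u
        = -((if |u| < 1 then -u else -Real.sign u) - -Real.tanh u) by
      split_ifs <;> ring, abs_neg]
    exact this

/-- Input-saturation approximation bound (equations (B15)-(B18)): the hard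
saturation with level `τmax` is approximated by `g(x) = τmax * tanh (x / τmax)`
with uniform error at most `τmax * (1 - tanh 1)`. Here `Real.sign x` is `1` for
`x > 0`, `-1` for `x < 0`, and `0` for `x = 0`. -/
theorem saturation_tanh_approx
    (τmax : ℝ) (hτ : 0 < τmax)
    (sat : ℝ → ℝ)
    (hsat : ∀ x, sat x = if |x| < τmax then x else Real.sign x * τmax) :
    ∀ x : ℝ, |sat x - τmax * Real.tanh (x / τmax)| ≤ τmax * (1 - Real.tanh 1) := by
  intro x
  rw [hsat]
  set u := x / τmax with hu
  have hx : x = τmax * u := by rw [hu]; field_simp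
  have habs : |x| < τmax ↔ |u| < 1 := by
    rw [hx, abs_mul, abs_of_pos hτ]
    constructor
    · intro h; exact lt_of_mul_lt_mul_left (by simpa using h) hτ.le
    · intro h; nlinarith [abs_nonneg u]
  have hsgn : Real.sign x = Real.sign u := by
    rcases lt_trichotomy u 0 with h | h | h
    · rw [Real.sign_of_neg h, Real.sign_of_neg (by rw [hx]; exact mul_neg_of_pos_of_neg hτ h)]
    · rw [h] at hx ⊢; simp [hx]
    · rw [Real.sign_of_pos h, Real.sign_of_pos (by rw [hx]; positivity)]
  have key' := key u
  have : (if |x| < τmax then x else Real.sign x * τmax) - τmax * Real.tanh u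
      = τmax * ((if |u| < 1 then u else Real.sign u) - Real.tanh u) := by
    by_cases h : |u| < 1
    · rw [if_pos (habs.2 h), if_pos h, hx]; ring
    · rw [if_neg (fun hh => h (habs.1 hh)), if_neg h, hsgn]; ring
  rw [this, abs_mul, abs_of_pos hτ]
  exact mul_le_mul_of_nonneg_left key' hτ.le
end

section
/- Let $n \ge 1$, let $\Omega \subseteq \mathbb{R}^n$ be compact, let $f : \mathbb{R}^n \to \mathbb{R}$ be continuous, and let $\varepsilon > 0$. Then there exist $h \ge 1$, weights $w \in \mathbb{R}^h$, centers $c_1, \dots, c_h \in \mathbb{R}^n$ and a width $\sigma > 0$ such that, defining $p_j(Z) = \prod_{i=1}^{n} \exp\!\left(-\frac{(Z_i - (c_j)_i)^2}{\sigma^2}\right)$ for $j = 1,\dots,h$, one has for every $Z \in \Omega$: $\sum_{j=1}^{h} p_j(Z) > 0$ and $\left| f(Z) - \frac{\sum_{j=1}^{h} w_j\, p_j(Z)}{\sum_{j=1}^{h} p_j(Z)} \right| \le \varepsilon$. -/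
open Real Finset Metric

set_option maxHeartbeats 2000000


/-- Fuzzy logic system universal approximation (Lemma 3): a fuzzy logic system with
normalized Gaussian membership functions can approximate any continuous function on
a compact set to any prescribed uniform accuracy `ε`. -/
theorem fuzzy_universal_approximation
    (n : ℕ) (hn : 1 ≤ n) (Ω : Set (Fin n → ℝ)) (hΩ : IsCompact Ω)
    (f : (Fin n → ℝ) → ℝ) (hf : Continuous f) (ε : ℝ) (hε : 0 < ε) :
    ∃ (h : ℕ) (w : Fin h → ℝ) (c : Fin h → (Fin n → ℝ)) (σ : ℝ),
      1 ≤ h ∧ 0 < σ ∧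
      ∀ Z ∈ Ω,
        0 < (∑ j, ∏ i, Real.exp (-(Z i - c j i) ^ 2 / σ ^ 2)) ∧
        |f Z - (∑ j, w j * ∏ i, Real.exp (-(Z i - c j i) ^ 2 / σ ^ 2))
            / (∑ j, ∏ i, Real.exp (-(Z i - c j i) ^ 2 / σ ^ 2))| ≤ ε := by
  classical
  have hn1 : (1:ℝ) ≤ (n:ℝ) := by exact_mod_cast hn
  have hnpos : (0:ℝ) < n := by linarith
  -- Bound Ω
  obtain ⟨R, hR0, hΩR⟩ := hΩ.isBounded.subset_closedBall_lt 0 0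
  set K : Set (Fin n → ℝ) := closedBall 0 (R + 1) with hK
  have hKcomp : IsCompact K := isCompact_closedBall _ _
  -- Bound f on K
  obtain ⟨M, hM1, hM⟩ : ∃ M : ℝ, 1 ≤ M ∧ ∀ x ∈ K, |f x| ≤ M := by
    obtain ⟨M0, hM0⟩ := hKcomp.exists_bound_of_continuousOn hf.continuousOn
    exact ⟨max M0 1, le_max_right _ _, fun x hx => le_trans (hM0 x hx) (le_max_left _ _)⟩
  have hMpos : (0:ℝ) < M := lt_of_lt_of_le one_pos hM1
  -- Uniform continuity on K
  obtain ⟨ρ, hρpos, hρ1, hρclose⟩ :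
      ∃ ρ : ℝ, 0 < ρ ∧ ρ ≤ 1 ∧ ∀ x ∈ K, ∀ y ∈ K, dist x y ≤ ρ → |f x - f y| ≤ ε/2 := by
    have hUC : UniformContinuousOn f K := hKcomp.uniformContinuousOn_of_continuous hf.continuousOn
    obtain ⟨ρ0, hρ00, hρ0⟩ := (Metric.uniformContinuousOn_iff.mp hUC) (ε/2) (half_pos hε)
    refine ⟨min 1 (ρ0/2), lt_min one_pos (half_pos hρ00), min_le_left _ _, ?_⟩
    intro x hx y hy hxy
    have h1 : dist x y < ρ0 := lt_of_le_of_lt (hxy.trans (min_le_right _ _)) (half_lt_self hρ00)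
    have h2 := hρ0 x hx y hy h1
    rw [Real.dist_eq] at h2
    exact h2.le
  -- grid spacing
  obtain ⟨δ, hδpos, hδ1, hnδ2⟩ : ∃ δ : ℝ, 0 < δ ∧ δ ≤ 1 ∧ (n:ℝ) * δ^2 ≤ ρ^2 / 2 := by
    refine ⟨ρ / (2 * n), by positivity, ?_, ?_⟩
    · rw [div_le_one (by positivity)]
      nlinarith [hρpos.le]
    · have key : (n:ℝ) * (ρ/(2*(n:ℝ)))^2 = ρ^2/(4*(n:ℝ)) := by field_simp; ring
      rw [key, div_le_div_iff₀ (by positivity) two_pos]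
      nlinarith [sq_nonneg ρ]
  -- axis grid: m points covering [-R, R] with spacing δ, all within [-(R+1), R+1]
  obtain ⟨m, hmpos, x, hxK, haxis⟩ :
      ∃ m : ℕ, 0 < m ∧ ∃ x : ℕ → ℝ, (∀ k < m, |x k| ≤ R + 1) ∧
        (∀ t : ℝ, -R ≤ t → t ≤ R → ∃ k < m, |t - x k| ≤ δ) := by
    refine ⟨⌈2*R/δ⌉₊ + 1, Nat.succ_pos _, fun k => -R + k * δ, ?_, ?_⟩
    · intro k hk
      have hk' : (k:ℝ) ≤ ⌈2*R/δ⌉₊ := by exact_mod_cast Nat.lt_succ_iff.mp hk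
      have hceil : (⌈2*R/δ⌉₊ : ℝ) ≤ 2*R/δ + 1 := (Nat.ceil_lt_add_one (by positivity)).le
      have hkδ : (k:ℝ) * δ ≤ 2*R + δ := by
        calc (k:ℝ) * δ ≤ (2*R/δ + 1) * δ :=
              mul_le_mul_of_nonneg_right (hk'.trans hceil) hδpos.le
          _ = 2*R + δ := by field_simp
      rw [abs_le]
      constructor
      · show -(R+1) ≤ -R + (k:ℝ) * δ
        nlinarith [mul_nonneg (Nat.cast_nonneg k) hδpos.le]
      · show -R + (k:ℝ) * δ ≤ R + 1
        nlinarith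
    · intro t ht1 ht2
      refine ⟨⌊(t + R)/δ⌋₊, ?_, ?_⟩
      · have h1 : ⌊(t + R)/δ⌋₊ ≤ ⌈(t+R)/δ⌉₊ := Nat.floor_le_ceil _
        have h2 : ⌈(t+R)/δ⌉₊ ≤ ⌈2*R/δ⌉₊ := by
          apply Nat.ceil_le_ceil
          gcongr
          linarith
        exact Nat.lt_succ_of_le (h1.trans h2)
      · have hnn : 0 ≤ (t + R)/δ := div_nonneg (by linarith) hδpos.le
        have hfl : (⌊(t + R)/δ⌋₊ : ℝ) * δ ≤ t + R := by
          rw [← le_div_iff₀ hδpos]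
          exact Nat.floor_le hnn
        have hfl2 : t + R < ((⌊(t + R)/δ⌋₊ : ℝ) + 1) * δ := by
          rw [← div_lt_iff₀ hδpos]
          exact Nat.lt_floor_add_one _
        rw [abs_le]
        constructor <;> nlinarith
  haveI : NeZero m := ⟨hmpos.ne'⟩
  haveI hGne : Nonempty (Fin n → Fin m) := ⟨fun _ => ⟨0, hmpos⟩⟩
  -- index type
  obtain ⟨h, ⟨e⟩⟩ : ∃ h : ℕ, Nonempty ((Fin n → Fin m) ≃ Fin h) :=
    ⟨Fintype.card (Fin n → Fin m), ⟨Fintype.equivFin _⟩⟩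
  have hh1 : 1 ≤ h := by
    have := Fintype.card_pos (α := Fin n → Fin m)
    have hcard : Fintype.card (Fin n → Fin m) = h := by
      rw [Fintype.card_congr e, Fintype.card_fin]
    omega
  haveI : Nonempty (Fin h) := ⟨⟨0, hh1⟩⟩
  set c : Fin h → (Fin n → ℝ) := fun j i => x ((e.symm j) i) with hcdef
  set w : Fin h → ℝ := fun j => f (c j) with hwdef
  -- centers are in K
  have hcK : ∀ j, c j ∈ K := by
    intro j
    rw [hK, mem_closedBall, dist_zero_right]
    rw [pi_norm_le_iff_of_nonneg (by linarith)]
    intro i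
    rw [Real.norm_eq_abs]
    exact hxK _ ((e.symm j) i).2
  have hhR : (0:ℝ) < h := by exact_mod_cast hh1
  -- choice of σ
  set B : ℝ := ε / (4 * M * h) with hBdef
  have hBpos : 0 < B := by positivity
  obtain ⟨σ, hσpos, hexpB⟩ : ∃ σ : ℝ, 0 < σ ∧ Real.exp (-(ρ^2/2) / σ^2) ≤ B := by
    set L : ℝ := max 1 (-Real.log B) with hLdef
    have hLpos : 0 < L := lt_of_lt_of_le one_pos (le_max_left _ _)
    refine ⟨Real.sqrt (ρ^2/2 / L), Real.sqrt_pos.mpr (by positivity), ?_⟩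
    have hσsq : Real.sqrt (ρ^2/2 / L) ^ 2 = ρ^2/2 / L := Real.sq_sqrt (by positivity)
    rw [hσsq]
    have h1 : -(ρ^2/2) / (ρ^2/2/L) = -L := by
      field_simp
    rw [h1]
    calc Real.exp (-L) ≤ Real.exp (Real.log B) := by
          apply Real.exp_le_exp.mpr
          have : -Real.log B ≤ L := le_max_right _ _
          linarith
      _ = B := Real.exp_log hBpos
  refine ⟨h, w, c, σ, hh1, hσpos, ?_⟩
  intro Z hZ
  -- basic facts about Z
  have hZR : ∀ i, |Z i| ≤ R := by
    intro i
    have h1 := hΩR hZ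
    rw [mem_closedBall, dist_zero_right] at h1
    calc |Z i| = ‖Z i‖ := rfl
      _ ≤ ‖Z‖ := norm_le_pi_norm Z i
      _ ≤ R := h1
  have hZK : Z ∈ K := by
    rw [hK, mem_closedBall, dist_zero_right]
    rw [pi_norm_le_iff_of_nonneg (by linarith)]
    intro i
    rw [Real.norm_eq_abs]
    linarith [hZR i]
  -- rewrite products as exponentials
  set q : Fin h → ℝ := fun j => Real.exp (-(∑ i, (Z i - c j i)^2) / σ^2) with hqdef
  have hq : ∀ j, (∏ i, Real.exp (-(Z i - c j i) ^ 2 / σ ^ 2)) = q j := by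
    intro j
    rw [hqdef]
    rw [← Real.exp_sum]
    congr 1
    rw [← Finset.sum_div]
    congr 1
    rw [← Finset.sum_neg_distrib]
  have hqpos : ∀ j, 0 < q j := fun j => Real.exp_pos _
  set S : ℝ := ∑ j, q j with hSdef
  have hSpos : 0 < S := Finset.sum_pos (fun j _ => hqpos j) Finset.univ_nonempty
  -- nearest grid point
  obtain ⟨g₀, hg₀⟩ : ∃ g₀ : Fin n → Fin m, ∀ i, |Z i - x (g₀ i)| ≤ δ := by
    have hch : ∀ i, ∃ k : Fin m, |Z i - x k.1| ≤ δ := by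
      intro i
      obtain ⟨k, hk, hk2⟩ := haxis (Z i) (by linarith [(abs_le.mp (hZR i)).1])
        (abs_le.mp (hZR i)).2
      exact ⟨⟨k, hk⟩, hk2⟩
    choose g₀ hg₀ using hch
    exact ⟨g₀, hg₀⟩
  have hcj₀ : ∀ i, c (e g₀) i = x (g₀ i) := by
    intro i
    simp [hcdef]
  -- lower bound for S
  have hSlow : Real.exp (-(ρ^2/2) / σ^2) ≤ S := by
    have h1 : (∑ i, (Z i - c (e g₀) i)^2) ≤ ρ^2/2 := by
      calc (∑ i, (Z i - c (e g₀) i)^2) ≤ ∑ _i : Fin n, δ^2 := by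
            apply Finset.sum_le_sum
            intro i _
            rw [hcj₀ i]
            have h2 := hg₀ i
            nlinarith [abs_nonneg (Z i - x (g₀ i)), sq_abs (Z i - x (g₀ i))]
        _ = n * δ^2 := by simp [mul_comm]
        _ ≤ ρ^2/2 := hnδ2
    calc Real.exp (-(ρ^2/2) / σ^2) ≤ q (e g₀) := by
          rw [hqdef]
          apply Real.exp_le_exp.mpr
          gcongr
      _ ≤ S := Finset.single_le_sum (fun j _ => (hqpos j).le) (Finset.mem_univ _)
  -- per-term bound
  have perterm : ∀ j, |f Z - w j| * q j ≤ (ε/2) * q j + 2*M*Real.exp (-ρ^2 / σ^2) := by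
    intro j
    by_cases hj : ∀ i, |Z i - c j i| ≤ ρ
    · have hd : dist Z (c j) ≤ ρ := by
        rw [dist_pi_le_iff hρpos.le]
        intro i
        rw [Real.dist_eq]
        exact hj i
      have hclose := hρclose Z hZK (c j) (hcK j) hd
      have h2 : |f Z - w j| * q j ≤ (ε/2) * q j := by
        apply mul_le_mul_of_nonneg_right _ (hqpos j).le
        exact hclose
      have h3 : 0 ≤ 2*M*Real.exp (-ρ^2 / σ^2) := by positivity
      exact h2.trans (le_add_of_nonneg_right h3)
    · push_neg at hj
      obtain ⟨i, hi⟩ := hj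
      have h1 : |f Z - w j| ≤ 2*M := by
        have ha := hM Z hZK
        have hb := hM (c j) (hcK j)
        have hwj : w j = f (c j) := rfl
        rw [hwj]
        calc |f Z - f (c j)| = |f Z + -(f (c j))| := by rw [sub_eq_add_neg]
          _ ≤ |f Z| + |-(f (c j))| := abs_add_le _ _
          _ = |f Z| + |f (c j)| := by rw [abs_neg]
          _ ≤ M + M := add_le_add ha hb
          _ = 2*M := by ring
      have h2 : q j ≤ Real.exp (-ρ^2 / σ^2) := by
        rw [hqdef]
        apply Real.exp_le_exp.mpr
        have hsum : ρ^2 ≤ ∑ i', (Z i' - c j i')^2 := by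
          calc ρ^2 ≤ (Z i - c j i)^2 := by
                nlinarith [sq_abs (Z i - c j i), abs_nonneg (Z i - c j i)]
            _ ≤ ∑ i', (Z i' - c j i')^2 :=
                Finset.single_le_sum (f := fun i' => (Z i' - c j i')^2)
                  (fun i' _ => sq_nonneg _) (Finset.mem_univ i)
        gcongr
      have h3 : 0 ≤ (ε/2) * q j := by positivity
      calc |f Z - w j| * q j ≤ 2*M * Real.exp (-ρ^2 / σ^2) :=
            mul_le_mul h1 h2 (hqpos j).le (by positivity)
        _ ≤ (ε/2) * q j + 2*M*Real.exp (-ρ^2 / σ^2) := le_add_of_nonneg_left h3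
  -- sum bound
  have hsum_le : ∑ j, |f Z - w j| * q j ≤ (ε/2) * S + h * (2*M*Real.exp (-ρ^2/σ^2)) := by
    calc ∑ j, |f Z - w j| * q j
        ≤ ∑ j, ((ε/2)*q j + 2*M*Real.exp (-ρ^2/σ^2)) :=
          Finset.sum_le_sum (fun j _ => perterm j)
      _ = (ε/2) * S + h * (2*M*Real.exp (-ρ^2/σ^2)) := by
          rw [Finset.sum_add_distrib, ← Finset.mul_sum, Finset.sum_const, Finset.card_univ,
            Fintype.card_fin, nsmul_eq_mul, hSdef]
  -- tail bound
  have htail : (h:ℝ) * (2*M*Real.exp (-ρ^2/σ^2)) ≤ (ε/2) * S := by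
    have e1 : Real.exp (-ρ^2/σ^2) = Real.exp (-(ρ^2/2)/σ^2) * Real.exp (-(ρ^2/2)/σ^2) := by
      rw [← Real.exp_add]
      congr 1
      ring
    have e2 : Real.exp (-ρ^2/σ^2) ≤ B * S := by
      rw [e1]
      exact mul_le_mul hexpB hSlow (Real.exp_pos _).le hBpos.le
    have e3 : (h:ℝ) * (2*M*B) = ε/2 := by
      rw [hBdef]
      field_simp
      ring
    calc (h:ℝ) * (2*M*Real.exp (-ρ^2/σ^2)) ≤ (h:ℝ) * (2*M*(B*S)) := by
          apply mul_le_mul_of_nonneg_left _ (by positivity)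
          apply mul_le_mul_of_nonneg_left e2 (by positivity)
      _ = ((h:ℝ) * (2*M*B)) * S := by ring
      _ = (ε/2) * S := by rw [e3]
  constructor
  · simp only [hq]
    rw [← hSdef]
    exact hSpos
  · simp only [hq]
    rw [← hSdef]
    have heq : f Z - (∑ j, w j * q j)/S = (∑ j, (f Z - w j) * q j)/S := by
      rw [eq_div_iff hSpos.ne', sub_mul, div_mul_cancel₀ _ hSpos.ne']
      rw [hSdef, Finset.mul_sum, ← Finset.sum_sub_distrib]
      exact Finset.sum_congr rfl (fun j _ => by ring)
    rw [heq, abs_div, abs_of_pos hSpos, div_le_iff₀ hSpos]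
    calc |∑ j, (f Z - w j)*q j| ≤ ∑ j, |(f Z - w j)*q j| :=
          Finset.abs_sum_le_sum_abs _ _
      _ = ∑ j, |f Z - w j| * q j := by
          refine Finset.sum_congr rfl fun j _ => ?_
          rw [abs_mul, abs_of_pos (hqpos j)]
      _ ≤ (ε/2)*S + h*(2*M*Real.exp (-ρ^2/σ^2)) := hsum_le
      _ ≤ (ε/2)*S + (ε/2)*S := add_le_add_right htail _
      _ = ε * S := by ring
end

section
/- For every $\gamma$ with $0 < \gamma < 1$ there exist constants $l_1 > 0$ and $l_2 > 0$ such that for all real numbers $\theta \ge 0$ and $\hat{\theta} \ge 0$: $(\theta - \hat{\theta})\,\hat{\theta}^{\gamma} \le l_1\,\theta^{1+\gamma} - l_2\,|\theta - \hat{\theta}|^{1+\gamma}$. -/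
/-- Key adaptive-law inequality (equation (52)) for the sublinear exponent
`0 < γ < 1`: there exist `l1, l2 > 0` with
`(θ - θ̂) θ̂^γ ≤ l1 θ^(1+γ) - l2 |θ - θ̂|^(1+γ)` for all nonnegative `θ, θ̂`.
Powers are real powers (`rpow`). -/
theorem adaptive_law_inequality_sublinear
    (γ : ℝ) (hγ0 : 0 < γ) (hγ1 : γ < 1) :
    ∃ l1 l2 : ℝ, 0 < l1 ∧ 0 < l2 ∧
      ∀ θ θhat : ℝ, 0 ≤ θ → 0 ≤ θhat →
        (θ - θhat) * θhat ^ γ ≤ l1 * θ ^ (1 + γ) - l2 * |θ - θhat| ^ (1 + γ) := by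
  refine ⟨2, 1, by norm_num, by norm_num, ?_⟩
  intro θ θhat hθ hθhat
  have h1γ : (0:ℝ) < 1 + γ := by linarith
  have hne : (1:ℝ) + γ ≠ 0 := ne_of_gt h1γ
  have hθpow : (0:ℝ) ≤ θ ^ (1 + γ) := Real.rpow_nonneg hθ _
  rcases le_or_gt θ θhat with h | h
  · have habs : |θ - θhat| = θhat - θ := by
      rw [abs_sub_comm, abs_of_nonneg (by linarith)]
    rw [habs]
    have hsplit : (θhat - θ) ^ (1 + γ) = (θhat - θ) * (θhat - θ) ^ γ := by
      rw [Real.rpow_add' (by linarith) hne, Real.rpow_one]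
    have hmono : (θhat - θ) ^ γ ≤ θhat ^ γ :=
      Real.rpow_le_rpow (by linarith) (by linarith) (le_of_lt hγ0)
    have hprod : (θhat - θ) * (θhat - θ) ^ γ ≤ (θhat - θ) * θhat ^ γ :=
      mul_le_mul_of_nonneg_left hmono (by linarith)
    rw [hsplit]
    nlinarith
  · have habs : |θ - θhat| = θ - θhat := abs_of_nonneg (by linarith)
    rw [habs]
    have hsplit : θ ^ (1 + γ) = θ * θ ^ γ := by
      rw [Real.rpow_add' hθ hne, Real.rpow_one]
    have hmono : θhat ^ γ ≤ θ ^ γ :=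
      Real.rpow_le_rpow hθhat (by linarith) (le_of_lt hγ0)
    have hprod : (θ - θhat) * θhat ^ γ ≤ θ * θ ^ γ := by
      have : (0:ℝ) ≤ θhat ^ γ := Real.rpow_nonneg hθhat _
      nlinarith
    have hbig : (θ - θhat) ^ (1 + γ) ≤ θ ^ (1 + γ) :=
      Real.rpow_le_rpow (by linarith) (by linarith) (le_of_lt h1γ)
    nlinarith
end

section
/- For every $\iota$ with $\iota > 1$ there exist constants $l_1 > 0$ and $l_2 > 0$ such that for all real numbers $\theta \ge 0$ and $\hat{\theta} \ge 0$: $(\theta - \hat{\theta})\,\hat{\theta}^{\iota} \le l_1\,\theta^{1+\iota} - l_2\,|\theta - \hat{\theta}|^{1+\iota}$. -/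
/-- Key adaptive-law inequality (equation (52b)) for the superlinear exponent
`ι > 1`: there exist `l1, l2 > 0` with
`(θ - θ̂) θ̂^ι ≤ l1 θ^(1+ι) - l2 |θ - θ̂|^(1+ι)` for all nonnegative `θ, θ̂`.
Powers are real powers (`rpow`). -/
theorem adaptive_law_inequality_superlinear
    (ι : ℝ) (hι : 1 < ι) :
    ∃ l1 l2 : ℝ, 0 < l1 ∧ 0 < l2 ∧
      ∀ θ θhat : ℝ, 0 ≤ θ → 0 ≤ θhat →
        (θ - θhat) * θhat ^ ι ≤ l1 * θ ^ (1 + ι) - l2 * |θ - θhat| ^ (1 + ι) := by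
  refine ⟨2, 1, by norm_num, by norm_num, fun θ θhat hθ hθhat => ?_⟩
  have hι0 : (0:ℝ) < ι := by linarith
  have habs : (0:ℝ) ≤ |θ - θhat| := abs_nonneg _
  have hne : 1 + ι ≠ 0 := by linarith
  have hsplit : |θ - θhat| ^ (1 + ι) = |θ - θhat| * |θ - θhat| ^ ι :=
    Real.rpow_one_add' habs hne
  rcases le_total θhat θ with h | h
  · -- θhat ≤ θ : e ≥ 0
    have he : |θ - θhat| = θ - θhat := abs_of_nonneg (by linarith)
    have h1 : (θ - θhat) * θhat ^ ι ≤ θ ^ (1 + ι) := by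
      calc (θ - θhat) * θhat ^ ι ≤ θ * θ ^ ι := by
            apply mul_le_mul (by linarith) (Real.rpow_le_rpow hθhat h (le_of_lt hι0))
              (Real.rpow_nonneg hθhat ι) hθ
        _ = θ ^ (1 + ι) := (Real.rpow_one_add' hθ hne).symm
    have h2 : |θ - θhat| ^ (1 + ι) ≤ θ ^ (1 + ι) := by
      apply Real.rpow_le_rpow habs (by rw [he]; linarith) (by linarith)
    linarith
  · -- θ ≤ θhat : e ≤ 0
    have he : |θ - θhat| = θhat - θ := abs_of_nonpos (by linarith) |>.trans (by ring)
    have key : (θ - θhat) * θhat ^ ι ≤ -(|θ - θhat| ^ (1 + ι)) := by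
      rw [hsplit, he]
      have h1 : (θhat - θ) ^ ι ≤ θhat ^ ι :=
        Real.rpow_le_rpow (by linarith) (by linarith) (le_of_lt hι0)
      nlinarith [Real.rpow_nonneg hθhat ι, Real.rpow_nonneg (show (0:ℝ) ≤ θhat - θ by linarith) ι]
    have hθp : 0 ≤ θ ^ (1 + ι) := Real.rpow_nonneg hθ _
    linarith
end
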